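/- arXiv:0909.3363 — 5 statements merged into one kernel-verified Lean document; each statement's English description precedes it below -/
import Mathlib

section
/- Let {ψ(θ,S), θ,S ∈ T_0} be a biadmissible family of nonnegative random variables. For each θ ∈ T_0 define u_1(θ) = ess sup_{τ_1 ∈ T_θ} E[ψ(τ_1, θ) | F_θ] and u_2(θ) = ess sup_{τ_2 ∈ T_θ} E[ψ(θ, τ_2) | F_θ]. Then the families {u_1(θ), θ ∈ T_0}, {u_2(θ), θ ∈ T_0}, and {φ(θ) := max(u_1(θ), u_2(θ)), θ ∈ T_0} are admissible families of nonnegative random variables. -/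
open MeasureTheory Filter Set Topology

variable {Ω : Type*}

/-- `τ` belongs to `T_0`: it is a stopping time of `𝓕` with values in `[0, T]`. -/
def MemT0 {m0 : MeasurableSpace Ω} (𝓕 : MeasureTheory.Filtration ℝ m0) (T : ℝ)
    (τ : Ω → ℝ) : Prop :=
  MeasureTheory.IsStoppingTime 𝓕 (fun ω => (τ ω : WithTop ℝ)) ∧ ∀ ω, τ ω ∈ Set.Icc (0 : ℝ) T

/-- `v` is an essential supremum of the family `f i`, `i` ranging over `{i | P i}`:
it dominates every member a.s. and is a.s. below any other a.s. upper bound. -/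
def IsEssSupFam {m0 : MeasurableSpace Ω} (μ : MeasureTheory.Measure Ω) {ι : Sort*}
    (P : ι → Prop) (f : ι → Ω → ℝ) (v : Ω → ℝ) : Prop :=
  (∀ i, P i → f i ≤ᵐ[μ] v) ∧ ∀ w : Ω → ℝ, (∀ i, P i → f i ≤ᵐ[μ] w) → v ≤ᵐ[μ] w

/-- `v` is an essential infimum of the family `f i`, `i` ranging over `{i | P i}`. -/
def IsEssInfFam {m0 : MeasurableSpace Ω} (μ : MeasureTheory.Measure Ω) {ι : Sort*}
    (P : ι → Prop) (f : ι → Ω → ℝ) (v : Ω → ℝ) : Prop :=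
  (∀ i, P i → v ≤ᵐ[μ] f i) ∧ ∀ w : Ω → ℝ, (∀ i, P i → w ≤ᵐ[μ] f i) → w ≤ᵐ[μ] v

/-- An admissible family of nonnegative random variables indexed by the stopping
times in `T_0`: `φ τ` is a nonnegative `F_τ`-measurable random variable, and
`φ τ = φ τ'` a.s. on `{τ = τ'}`. -/
def Admissible {m0 : MeasurableSpace Ω} (𝓕 : MeasureTheory.Filtration ℝ m0) (T : ℝ)
    (μ : MeasureTheory.Measure Ω) (φ : (Ω → ℝ) → Ω → ℝ) : Prop :=
  (∀ τ (hτ : MemT0 𝓕 T τ),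
      Measurable[hτ.1.measurableSpace] (φ τ) ∧ ∀ ω, 0 ≤ φ τ ω) ∧
  ∀ τ τ', MemT0 𝓕 T τ → MemT0 𝓕 T τ' →
    ∀ᵐ ω ∂μ, τ ω = τ' ω → φ τ ω = φ τ' ω

/-- An a.e. variant of admissibility (for families defined only up to a.s. equality,
such as value-function families): `φ τ` is a.s. nonnegative and a.s. equal to some
`F_τ`-measurable random variable, and `φ τ = φ τ'` a.s. on `{τ = τ'}`. -/
def AdmissibleAE {m0 : MeasurableSpace Ω} (𝓕 : MeasureTheory.Filtration ℝ m0) (T : ℝ)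
    (μ : MeasureTheory.Measure Ω) (φ : (Ω → ℝ) → Ω → ℝ) : Prop :=
  (∀ τ (hτ : MemT0 𝓕 T τ),
      (∀ᵐ ω ∂μ, 0 ≤ φ τ ω) ∧
      ∃ w : Ω → ℝ, Measurable[hτ.1.measurableSpace] w ∧ φ τ =ᵐ[μ] w) ∧
  ∀ τ τ', MemT0 𝓕 T τ → MemT0 𝓕 T τ' →
    ∀ᵐ ω ∂μ, τ ω = τ' ω → φ τ ω = φ τ' ω

/-- A biadmissible family: `ψ τ S` is a nonnegative `F_{τ ∨ S}`-measurable random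
variable, and `ψ τ S = ψ τ' S'` a.s. on `{τ = τ'} ∩ {S = S'}`. -/
def Biadmissible {m0 : MeasurableSpace Ω} (𝓕 : MeasureTheory.Filtration ℝ m0) (T : ℝ)
    (μ : MeasureTheory.Measure Ω) (ψ : (Ω → ℝ) → (Ω → ℝ) → Ω → ℝ) : Prop :=
  (∀ τ S (hτ : MemT0 𝓕 T τ) (hS : MemT0 𝓕 T S),
      Measurable[(hτ.1.max hS.1).measurableSpace] (ψ τ S) ∧ ∀ ω, 0 ≤ ψ τ S ω) ∧
  ∀ τ τ' S S', MemT0 𝓕 T τ → MemT0 𝓕 T τ' → MemT0 𝓕 T S → MemT0 𝓕 T S' →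
    ∀ᵐ ω ∂μ, τ ω = τ' ω → S ω = S' ω → ψ τ S ω = ψ τ' S' ω

/-- `θn ↓ θ` a.s.: the sequence is a.s. nonincreasing and converges a.s. to `θ`. -/
def DownAS {m0 : MeasurableSpace Ω} (μ : MeasureTheory.Measure Ω)
    (θn : ℕ → Ω → ℝ) (θ : Ω → ℝ) : Prop :=
  ∀ᵐ ω ∂μ, (∀ n, θn (n + 1) ω ≤ θn n ω) ∧
    Filter.Tendsto (fun n => θn n ω) Filter.atTop (nhds (θ ω))

/-- `θn ↑ θ` a.s.: the sequence is a.s. nondecreasing and converges a.s. to `θ`. -/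
def UpAS {m0 : MeasurableSpace Ω} (μ : MeasureTheory.Measure Ω)
    (θn : ℕ → Ω → ℝ) (θ : Ω → ℝ) : Prop :=
  ∀ᵐ ω ∂μ, (∀ n, θn n ω ≤ θn (n + 1) ω) ∧
    Filter.Tendsto (fun n => θn n ω) Filter.atTop (nhds (θ ω))

/-- The family `φ` is right continuous along stopping times in expectation. -/
def RCE {m0 : MeasurableSpace Ω} (𝓕 : MeasureTheory.Filtration ℝ m0) (T : ℝ)
    (μ : MeasureTheory.Measure Ω) (φ : (Ω → ℝ) → Ω → ℝ) : Prop :=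
  ∀ θ, MemT0 𝓕 T θ → ∀ θn : ℕ → Ω → ℝ, (∀ n, MemT0 𝓕 T (θn n)) → DownAS μ θn θ →
    Filter.Tendsto (fun n => ∫ ω, φ (θn n) ω ∂μ) Filter.atTop (nhds (∫ ω, φ θ ω ∂μ))

/-- The family `φ` is left continuous along stopping times in expectation. -/
def LCE {m0 : MeasurableSpace Ω} (𝓕 : MeasureTheory.Filtration ℝ m0) (T : ℝ)
    (μ : MeasureTheory.Measure Ω) (φ : (Ω → ℝ) → Ω → ℝ) : Prop :=
  ∀ θ, MemT0 𝓕 T θ → ∀ θn : ℕ → Ω → ℝ, (∀ n, MemT0 𝓕 T (θn n)) → UpAS μ θn θ →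
    Filter.Tendsto (fun n => ∫ ω, φ (θn n) ω ∂μ) Filter.atTop (nhds (∫ ω, φ θ ω ∂μ))

/-- The biadmissible family `ψ` is uniformly right continuous in expectation along
stopping times: for `S_n ↓ S` a.s. (all in `T_0`), the expectation of the essential
supremum over `θ ∈ T_0` of `|ψ(θ, S) - ψ(θ, S_n)|` (resp. `|ψ(S, θ) - ψ(S_n, θ)|`)
tends to `0`. -/
def URCE {m0 : MeasurableSpace Ω} (𝓕 : MeasureTheory.Filtration ℝ m0) (T : ℝ)
    (μ : MeasureTheory.Measure Ω) (ψ : (Ω → ℝ) → (Ω → ℝ) → Ω → ℝ) : Prop :=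
  ∀ S, MemT0 𝓕 T S → ∀ Sn : ℕ → Ω → ℝ, (∀ n, MemT0 𝓕 T (Sn n)) → DownAS μ Sn S →
    (∀ D : ℕ → Ω → ℝ,
      (∀ n, IsEssSupFam μ (MemT0 𝓕 T) (fun θ ω => |ψ θ S ω - ψ θ (Sn n) ω|) (D n)) →
      Filter.Tendsto (fun n => ∫ ω, D n ω ∂μ) Filter.atTop (nhds 0)) ∧
    ∀ D : ℕ → Ω → ℝ,
      (∀ n, IsEssSupFam μ (MemT0 𝓕 T) (fun θ ω => |ψ S θ ω - ψ (Sn n) θ ω|) (D n)) →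
      Filter.Tendsto (fun n => ∫ ω, D n ω ∂μ) Filter.atTop (nhds 0)

/-- The biadmissible family `ψ` is uniformly left continuous in expectation along
stopping times. -/
def ULCE {m0 : MeasurableSpace Ω} (𝓕 : MeasureTheory.Filtration ℝ m0) (T : ℝ)
    (μ : MeasureTheory.Measure Ω) (ψ : (Ω → ℝ) → (Ω → ℝ) → Ω → ℝ) : Prop :=
  ∀ S, MemT0 𝓕 T S → ∀ Sn : ℕ → Ω → ℝ, (∀ n, MemT0 𝓕 T (Sn n)) → UpAS μ Sn S →
    (∀ D : ℕ → Ω → ℝ,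
      (∀ n, IsEssSupFam μ (MemT0 𝓕 T) (fun θ ω => |ψ θ S ω - ψ θ (Sn n) ω|) (D n)) →
      Filter.Tendsto (fun n => ∫ ω, D n ω ∂μ) Filter.atTop (nhds 0)) ∧
    ∀ D : ℕ → Ω → ℝ,
      (∀ n, IsEssSupFam μ (MemT0 𝓕 T) (fun θ ω => |ψ S θ ω - ψ (Sn n) θ ω|) (D n)) →
      Filter.Tendsto (fun n => ∫ ω, D n ω ∂μ) Filter.atTop (nhds 0)

section AuxLemmas

variable {m0 : MeasurableSpace Ω}

/-- Any a.e.-nonnegative function admits a greatest `m`-measurable a.e. minorant. -/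
lemma exists_greatest_meas_minorant {m : MeasurableSpace Ω} (hm : m ≤ m0)
    (μ : @MeasureTheory.Measure Ω m0) [IsProbabilityMeasure μ] (v : Ω → ℝ) (hv0 : 0 ≤ᵐ[μ] v) :
    ∃ w : Ω → ℝ, Measurable[m] w ∧ w ≤ᵐ[μ] v ∧
      ∀ h : Ω → ℝ, Measurable[m] h → h ≤ᵐ[μ] v → h ≤ᵐ[μ] w := by
  classical
  set H : Set (Ω → ℝ) := {h | Measurable[m] h ∧ (∀ ω, 0 ≤ h ω) ∧ h ≤ᵐ[μ] v} with hH
  have h0H : (fun _ : Ω => (0 : ℝ)) ∈ H := ⟨measurable_const, fun _ => le_rfl, hv0⟩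
  have harct : ∀ x : ℝ, |Real.arctan x| ≤ Real.pi / 2 := fun x =>
    abs_le.2 ⟨(Real.neg_pi_div_two_lt_arctan x).le, (Real.arctan_lt_pi_div_two x).le⟩
  have hint : ∀ h ∈ H, MeasureTheory.Integrable (fun ω => Real.arctan (h ω)) μ := by
    intro h hh
    have hma : Measurable[m0] fun ω => Real.arctan (h ω) :=
      Real.continuous_arctan.measurable.comp (hh.1.mono hm le_rfl)
    have hma' : MeasureTheory.AEStronglyMeasurable (m := m0) (fun ω => Real.arctan (h ω)) μ :=
      hma.aestronglyMeasurable
    refine (MeasureTheory.integrable_const (Real.pi / 2)).mono' hma' ?_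
    filter_upwards with ω
    simpa [Real.norm_eq_abs] using harct (h ω)
  set S : Set ℝ := (fun h : Ω → ℝ => ∫ ω, Real.arctan (h ω) ∂μ) '' H with hS
  have hSne : S.Nonempty := ⟨_, ⟨_, h0H, rfl⟩⟩
  have hSbdd : BddAbove S := by
    refine ⟨Real.pi / 2, ?_⟩
    rintro r ⟨h, hh, rfl⟩
    calc ∫ ω, Real.arctan (h ω) ∂μ ≤ ∫ _ω, Real.pi / 2 ∂μ :=
          MeasureTheory.integral_mono (hint h hh) (MeasureTheory.integrable_const _)
            fun ω => (Real.arctan_lt_pi_div_two _).le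
      _ = Real.pi / 2 := by simp
  set α := sSup S with hα
  have hchoice : ∀ n : ℕ, ∃ h, h ∈ H ∧ α - 1 / (n + 1) < ∫ ω, Real.arctan (h ω) ∂μ := by
    intro n
    obtain ⟨r, hrS, hr⟩ := exists_lt_of_lt_csSup hSne
      (show α - 1 / ((n : ℝ) + 1) < α by
        have : (0 : ℝ) < 1 / ((n : ℝ) + 1) := by positivity
        linarith)
    obtain ⟨h, hh, rfl⟩ := hrS
    exact ⟨h, hh, hr⟩
  choose hs hsH hslt using hchoice
  set k : ℕ → Ω → ℝ := fun n =>
    Nat.rec (hs 0) (fun n kn => fun ω => max (kn ω) (hs (n + 1) ω)) n with hk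
  have hkH : ∀ n, k n ∈ H := by
    intro n
    induction n with
    | zero => exact hsH 0
    | succ n ih =>
      exact ⟨ih.1.max (hsH (n + 1)).1,
        fun ω => le_trans (ih.2.1 ω) (le_max_left _ _),
        by filter_upwards [ih.2.2, (hsH (n + 1)).2.2] with ω h1 h2 using max_le h1 h2⟩
  have hkmono : ∀ ω, Monotone fun n => k n ω := fun ω =>
    monotone_nat_of_le_succ fun n => le_max_left _ _
  have hks : ∀ n ω, hs n ω ≤ k n ω := by
    intro n ω
    cases n with
    | zero => exact le_rfl
    | succ n => exact le_max_right _ _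
  have hklo : ∀ n : ℕ, α - 1 / (n + 1) ≤ ∫ ω, Real.arctan (k n ω) ∂μ := by
    intro n
    refine (hslt n).le.trans
      (MeasureTheory.integral_mono (hint _ (hsH n)) (hint _ (hkH n)) fun ω => ?_)
    exact Real.arctan_strictMono.monotone (hks n ω)
  have hkhi : ∀ n, ∫ ω, Real.arctan (k n ω) ∂μ ≤ α := fun n =>
    le_csSup hSbdd ⟨k n, hkH n, rfl⟩
  set W : Ω → ENNReal := fun ω => ⨆ n, ENNReal.ofReal (k n ω) with hW
  have hWmeas : Measurable[m] W :=
    Measurable.iSup fun n => ENNReal.measurable_ofReal.comp (hkH n).1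
  set w : Ω → ℝ := fun ω => (W ω).toReal with hwdef
  have hwmeas : Measurable[m] w := ENNReal.measurable_toReal.comp hWmeas
  have hw0 : ∀ ω, 0 ≤ w ω := fun ω => ENNReal.toReal_nonneg
  have hE : ∀ᵐ ω ∂μ, (∀ n, k n ω ≤ v ω) ∧ 0 ≤ v ω := by
    have h1 : ∀ᵐ ω ∂μ, ∀ n, k n ω ≤ v ω := MeasureTheory.ae_all_iff.2 fun n => (hkH n).2.2
    filter_upwards [h1, hv0] with ω ha hb using ⟨ha, hb⟩
  have key : ∀ᵐ ω ∂μ, Filter.Tendsto (fun n => k n ω) Filter.atTop (nhds (w ω)) ∧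
      w ω ≤ v ω ∧ ∀ n, k n ω ≤ w ω := by
    filter_upwards [hE] with ω hω
    obtain ⟨h1, _h2⟩ := hω
    have hbdd : BddAbove (Set.range fun n => k n ω) := by
      refine ⟨v ω, ?_⟩
      rintro _ ⟨n, rfl⟩
      exact h1 n
    have htend : Filter.Tendsto (fun n => k n ω) Filter.atTop (nhds (⨆ n, k n ω)) :=
      tendsto_atTop_ciSup (hkmono ω) hbdd
    have hL0 : 0 ≤ ⨆ n, k n ω := le_trans ((hkH 0).2.1 ω) (le_ciSup hbdd 0)
    have hWω : W ω = ENNReal.ofReal (⨆ n, k n ω) := by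
      refine iSup_eq_of_tendsto (fun a b hab => ENNReal.ofReal_le_ofReal (hkmono ω hab)) ?_
      exact (ENNReal.continuous_ofReal.tendsto _).comp htend
    have hwω : w ω = ⨆ n, k n ω := by
      rw [hwdef]; dsimp only; rw [hWω, ENNReal.toReal_ofReal hL0]
    refine ⟨hwω ▸ htend, hwω ▸ ciSup_le h1, fun n => hwω ▸ le_ciSup hbdd n⟩
  refine ⟨w, hwmeas, by filter_upwards [key] with ω h using h.2.1, ?_⟩
  intro h hmeas hle
  set h' : Ω → ℝ := fun ω => max (h ω) 0 with hh'
  have hh'H : h' ∈ H := ⟨hmeas.max measurable_const, fun ω => le_max_right _ _,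
    by filter_upwards [hle, hv0] with ω h1 h2 using max_le h1 h2⟩
  have hwH : w ∈ H := ⟨hwmeas, hw0, by filter_upwards [key] with ω hk using hk.2.1⟩
  have hmaxH : ∀ g ∈ H, (fun ω => max (h' ω) (g ω)) ∈ H := by
    intro g hg
    exact ⟨hh'H.1.max hg.1, fun ω => le_trans (hh'H.2.1 ω) (le_max_left _ _),
      by filter_upwards [hh'H.2.2, hg.2.2] with ω h1 h2 using max_le h1 h2⟩
  have hGle : ∀ n : ℕ,
      ∫ ω, (Real.arctan (max (h' ω) (k n ω)) - Real.arctan (k n ω)) ∂μ ≤ 1 / (n + 1) := by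
    intro n
    rw [MeasureTheory.integral_sub (hint _ (hmaxH _ (hkH n))) (hint _ (hkH n))]
    have h1 : ∫ ω, Real.arctan (max (h' ω) (k n ω)) ∂μ ≤ α :=
      le_csSup hSbdd ⟨_, hmaxH _ (hkH n), rfl⟩
    have h2 := hklo n
    linarith
  set G : Ω → ℝ := fun ω => Real.arctan (max (h' ω) (w ω)) - Real.arctan (w ω) with hG
  have hGint : MeasureTheory.Integrable G μ :=
    (hint _ (hmaxH _ hwH)).sub (hint _ hwH)
  have htendG : Filter.Tendsto
      (fun n => ∫ ω, (Real.arctan (max (h' ω) (k n ω)) - Real.arctan (k n ω)) ∂μ)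
      Filter.atTop (nhds (∫ ω, G ω ∂μ)) := by
    refine MeasureTheory.tendsto_integral_of_dominated_convergence (fun _ => Real.pi)
      (fun n => by
        have m1 : Measurable[m0] fun ω => Real.arctan (max (h' ω) (k n ω)) :=
          Real.continuous_arctan.measurable.comp (((hmaxH _ (hkH n)).1).mono hm le_rfl)
        have m2 : Measurable[m0] fun ω => Real.arctan (k n ω) :=
          Real.continuous_arctan.measurable.comp ((hkH n).1.mono hm le_rfl)
        have hsub : Measurable[m0] fun ω => Real.arctan (max (h' ω) (k n ω)) - Real.arctan (k n ω) :=
          m1.sub m2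
        exact hsub.aestronglyMeasurable)
      (MeasureTheory.integrable_const _) (fun n => ?_) ?_
    · filter_upwards with ω
      have b1 := harct (max (h' ω) (k n ω))
      have b2 := harct (k n ω)
      rw [Real.norm_eq_abs]
      calc |Real.arctan (max (h' ω) (k n ω)) - Real.arctan (k n ω)|
          ≤ |Real.arctan (max (h' ω) (k n ω))| + |Real.arctan (k n ω)| := abs_sub _ _
        _ ≤ Real.pi := by linarith
    · filter_upwards [key] with ω hω
      have h1 : Filter.Tendsto (fun n => max (h' ω) (k n ω)) Filter.atTop
          (nhds (max (h' ω) (w ω))) := tendsto_const_nhds.max hω.1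
      exact ((Real.continuous_arctan.tendsto _).comp h1).sub
        ((Real.continuous_arctan.tendsto _).comp hω.1)
  have hGnonneg : 0 ≤ᵐ[μ] G := Filter.Eventually.of_forall fun ω =>
    sub_nonneg.2 (Real.arctan_strictMono.monotone (le_max_right _ _))
  have hGzero : ∫ ω, G ω ∂μ = 0 := by
    have hle0 : ∫ ω, G ω ∂μ ≤ 0 := by
      refine le_of_tendsto_of_tendsto' htendG tendsto_one_div_add_atTop_nhds_zero_nat
        fun n => ?_
      exact hGle n
    have hge0 : 0 ≤ ∫ ω, G ω ∂μ := MeasureTheory.integral_nonneg_of_ae hGnonneg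
    linarith
  have hGae : G =ᵐ[μ] 0 := (MeasureTheory.integral_eq_zero_iff_of_nonneg_ae hGnonneg hGint).1 hGzero
  filter_upwards [hGae] with ω hω
  have : Real.arctan (max (h' ω) (w ω)) = Real.arctan (w ω) := by
    have : G ω = 0 := hω
    rw [hG] at this
    dsimp only at this
    linarith
  have hmax : max (h' ω) (w ω) = w ω := Real.arctan_injective this
  calc h ω ≤ h' ω := le_max_left _ _
    _ ≤ w ω := by rw [← hmax]; exact le_max_left _ _

lemma stoppingTime_measurableSpace_congr {𝓕 : MeasureTheory.Filtration ℝ m0} {τ σ : Ω → WithTop ℝ}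
    (hτ : MeasureTheory.IsStoppingTime 𝓕 τ) (hσ : MeasureTheory.IsStoppingTime 𝓕 σ)
    (h : ∀ ω, τ ω = σ ω) : hτ.measurableSpace = hσ.measurableSpace := by
  have hfun : τ = σ := funext h
  subst hfun
  rfl

lemma measurableSet_inter_eq_stopping_time_min {𝓕 : MeasureTheory.Filtration ℝ m0} {τ σ : Ω → ℝ}
    (hτ : MeasureTheory.IsStoppingTime 𝓕 (fun ω => (τ ω : WithTop ℝ)))
    (hσ : MeasureTheory.IsStoppingTime 𝓕 (fun ω => (σ ω : WithTop ℝ)))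
    (t : Set Ω) (h : MeasurableSet[hτ.measurableSpace] ({ω | τ ω = σ ω} ∩ t)) :
    MeasurableSet[(hτ.min hσ).measurableSpace] ({ω | τ ω = σ ω} ∩ t) := by
  have e1 : (({ω | τ ω = σ ω} ∩ t) ∩ {ω | σ ω ≤ τ ω}) ∩ {ω | τ ω ≤ σ ω}
      = {ω | τ ω = σ ω} ∩ t := by
    ext ω
    constructor
    · exact fun hh => hh.1.1
    · rintro ⟨he, ht⟩
      exact ⟨⟨⟨he, ht⟩, he.ge⟩, he.le⟩
  have := (MeasureTheory.IsStoppingTime.measurableSet_inter_le_iff hτ hσ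
    (({ω | τ ω = σ ω} ∩ t) ∩ {ω | σ ω ≤ τ ω})).mp
      (by simp only [WithTop.coe_le_coe]; rw [e1]; exact h)
  simp only [WithTop.coe_le_coe] at this
  rw [e1] at this
  exact this

lemma measurableSet_inter_eq_stopping_time_iff {𝓕 : MeasureTheory.Filtration ℝ m0} {τ σ : Ω → ℝ}
    (hτ : MeasureTheory.IsStoppingTime 𝓕 (fun ω => (τ ω : WithTop ℝ)))
    (hσ : MeasureTheory.IsStoppingTime 𝓕 (fun ω => (σ ω : WithTop ℝ)))
    (t : Set Ω) :
    MeasurableSet[hτ.measurableSpace] ({ω | τ ω = σ ω} ∩ t) ↔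
      MeasurableSet[hσ.measurableSpace] ({ω | τ ω = σ ω} ∩ t) := by
  have hsymm : {ω | τ ω = σ ω} = {ω | σ ω = τ ω} := by
    ext ω; exact eq_comm
  constructor
  · intro h
    exact ((MeasureTheory.IsStoppingTime.measurableSet_min_iff hτ hσ _).1
      (measurableSet_inter_eq_stopping_time_min hτ hσ t h)).2
  · intro h
    rw [hsymm] at h ⊢
    exact ((MeasureTheory.IsStoppingTime.measurableSet_min_iff hσ hτ _).1
      (measurableSet_inter_eq_stopping_time_min hσ hτ t h)).2

lemma admissibleAE_of_essSupFam
    (μ : MeasureTheory.Measure Ω) [IsProbabilityMeasure μ]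
    (𝓕 : MeasureTheory.Filtration ℝ m0) (T : ℝ)
    (ψ : (Ω → ℝ) → (Ω → ℝ) → Ω → ℝ)
    (hψ : Biadmissible 𝓕 T μ ψ)
    (hψint : ∀ τ₁ τ₂, MemT0 𝓕 T τ₁ → MemT0 𝓕 T τ₂ → MeasureTheory.Integrable (ψ τ₁ τ₂) μ)
    (u : (Ω → ℝ) → Ω → ℝ)
    (hu : ∀ θ (hθ : MemT0 𝓕 T θ),
      IsEssSupFam μ (fun τ => MemT0 𝓕 T τ ∧ θ ≤ᵐ[μ] τ)
        (fun τ => μ[ψ τ θ | hθ.1.measurableSpace]) (u θ)) :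
    AdmissibleAE 𝓕 T μ u := by
  constructor
  · -- nonnegativity and measurable version
    intro θ hθ
    have hmθle : hθ.1.measurableSpace ≤ m0 := hθ.1.measurableSpace_le
    have hPθ : MemT0 𝓕 T θ ∧ θ ≤ᵐ[μ] θ := ⟨hθ, Filter.Eventually.of_forall fun _ => le_rfl⟩
    have hself := (hu θ hθ).1 θ hPθ
    have hnn : 0 ≤ᵐ[μ] μ[ψ θ θ | hθ.1.measurableSpace] :=
      MeasureTheory.condExp_nonneg (Filter.Eventually.of_forall fun ω => (hψ.1 θ θ hθ hθ).2 ω)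
    have hv0 : ∀ᵐ ω ∂μ, 0 ≤ u θ ω := by
      filter_upwards [hself, hnn] with ω h1 h2 using le_trans h2 h1
    refine ⟨hv0, ?_⟩
    obtain ⟨w, hwmeas, hwle, hwmax⟩ := exists_greatest_meas_minorant hmθle μ (u θ) hv0
    have hub : ∀ τ, (MemT0 𝓕 T τ ∧ θ ≤ᵐ[μ] τ) → μ[ψ τ θ | hθ.1.measurableSpace] ≤ᵐ[μ] w :=
      fun τ hPτ => hwmax _ MeasureTheory.stronglyMeasurable_condExp.measurable
        ((hu θ hθ).1 τ hPτ)
    exact ⟨w, hwmeas, ((hu θ hθ).2 w hub).antisymm hwle⟩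
  · -- a.s. equality on {θ = θ'}
    have side : ∀ θ θ' (hθ : MemT0 𝓕 T θ) (hθ' : MemT0 𝓕 T θ'),
        ∀ᵐ ω ∂μ, θ ω = θ' ω → u θ ω ≤ u θ' ω := by
      intro θ θ' hθ hθ'
      have hmθle : hθ.1.measurableSpace ≤ m0 := hθ.1.measurableSpace_le
      have hmθ'le : hθ'.1.measurableSpace ≤ m0 := hθ'.1.measurableSpace_le
      set mθ := hθ.1.measurableSpace
      set mθ' := hθ'.1.measurableSpace
      set A : Set Ω := {ω | θ ω = θ' ω} with hAdef
      have hAθ : MeasurableSet[mθ] A := by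
        simpa only [WithTop.coe_eq_coe] using hθ.1.measurableSet_eq_stopping_time hθ'.1
      have hAθ' : MeasurableSet[mθ'] A := by
        have hsymm : A = {ω | θ' ω = θ ω} := by ext ω; exact eq_comm
        rw [hsymm]
        simpa only [WithTop.coe_eq_coe] using hθ'.1.measurableSet_eq_stopping_time hθ.1
      have hA0 : MeasurableSet[m0] A := hmθle _ hAθ
      have iA : ∀ g : Ω → ℝ, A.indicator g =ᵐ[μ.restrict A] g :=
        fun g => @indicator_ae_eq_restrict Ω ℝ m0 μ A g _ hA0
      set W : Ω → ℝ := fun ω => if θ ω = θ' ω then u θ' ω else u θ ω with hWdef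
      have hub : ∀ τ, (MemT0 𝓕 T τ ∧ θ ≤ᵐ[μ] τ) → μ[ψ τ θ | mθ] ≤ᵐ[μ] W := by
        rintro τ ⟨hτ, hθτ⟩
        set τh : Ω → ℝ := fun ω => max (τ ω) (θ ω) with hτhdef
        have hτhT0 : MemT0 𝓕 T τh :=
          ⟨by simpa only [← WithTop.coe_max] using hτ.1.max hθ.1, fun ω => ⟨le_trans (hτ.2 ω).1 (le_max_left _ _),
            max_le (hτ.2 ω).2 (hθ.2 ω).2⟩⟩
        have hcongr : μ[ψ τ θ | mθ] =ᵐ[μ] μ[ψ τh θ | mθ] := by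
          refine MeasureTheory.condExp_congr_ae ?_
          filter_upwards [hψ.2 τ τh θ θ hτ hτhT0 hθ hθ, hθτ] with ω h1 h2
          exact h1 (max_eq_left h2).symm rfl
        set τ'' : Ω → ℝ := fun ω => if θ ω = θ' ω then τh ω else θ' ω with hτ''def
        have hτ''st : MeasureTheory.IsStoppingTime 𝓕 (fun ω => (τ'' ω : WithTop ℝ)) := by
          intro t
          simp only [WithTop.coe_le_coe]
          have hset : {ω | τ'' ω ≤ t} =
              ((A ∩ {ω | θ' ω ≤ t}) ∩ {ω | τh ω ≤ t}) ∪ (Aᶜ ∩ {ω | θ' ω ≤ t}) := by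
            ext ω
            by_cases hω : θ ω = θ' ω
            · have hθ'τh : θ' ω ≤ τh ω := by
                rw [← hω]; exact le_max_right _ _
              simp only [hτ''def, Set.mem_setOf_eq, Set.mem_union, Set.mem_inter_iff,
                Set.mem_compl_iff, hAdef, if_pos hω]
              constructor
              · intro hle
                exact Or.inl ⟨⟨hω, le_trans hθ'τh hle⟩, hle⟩
              · rintro (⟨_, hle⟩ | ⟨hne, _⟩)
                · exact hle
                · exact absurd hω hne
            · simp only [hτ''def, Set.mem_setOf_eq, Set.mem_union, Set.mem_inter_iff,
                Set.mem_compl_iff, hAdef, if_neg hω]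
              constructor
              · intro hle
                exact Or.inr ⟨hω, hle⟩
              · rintro (⟨⟨heq, _⟩, _⟩ | ⟨_, hle⟩)
                · exact absurd heq hω
                · exact hle
          rw [hset]
          refine MeasurableSet.union ?_ ?_
          · have h1 := ((MeasureTheory.IsStoppingTime.measurableSet hθ'.1 A).mp hAθ').2 t
            have h2 := hτhT0.1 t
            simp only [WithTop.coe_le_coe] at h1 h2
            exact h1.inter h2
          · have h1 := ((MeasureTheory.IsStoppingTime.measurableSet hθ'.1 Aᶜ).mp hAθ'.compl).2 t
            simp only [WithTop.coe_le_coe] at h1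
            exact h1
        have hτ''T0 : MemT0 𝓕 T τ'' := by
          refine ⟨hτ''st, fun ω => ?_⟩
          by_cases hω : θ ω = θ' ω
          · simpa [hτ''def, if_pos hω] using hτhT0.2 ω
          · simpa [hτ''def, if_neg hω] using hθ'.2 ω
        have hθ'τ'' : θ' ≤ᵐ[μ] τ'' := by
          refine Filter.Eventually.of_forall fun ω => ?_
          by_cases hω : θ ω = θ' ω
          · simp only [hτ''def, if_pos hω]
            rw [← hω]; exact le_max_right _ _
          · simp [hτ''def, if_neg hω]
        have hind : A.indicator (ψ τh θ) =ᵐ[μ] A.indicator (ψ τ'' θ') := by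
          filter_upwards [hψ.2 τh τ'' θ θ' hτhT0 hτ''T0 hθ hθ'] with ω h
          by_cases hω : ω ∈ A
          · have hωe : θ ω = θ' ω := hω
            rw [Set.indicator_of_mem hω, Set.indicator_of_mem hω]
            exact h (by simp [hτ''def, if_pos hωe]) hωe
          · rw [Set.indicator_of_notMem hω, Set.indicator_of_notMem hω]
        have hintτh := hψint τh θ hτhT0 hθ
        have hintτ'' := hψint τ'' θ' hτ''T0 hθ'
        have e1 : μ[ψ τh θ | mθ] =ᵐ[μ.restrict A] μ[A.indicator (ψ τh θ) | mθ] := by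
          have i1 : μ[A.indicator (ψ τh θ) | mθ] =ᵐ[μ] A.indicator (μ[ψ τh θ | mθ]) :=
            MeasureTheory.condExp_indicator hintτh hAθ
          calc μ[ψ τh θ | mθ] =ᵐ[μ.restrict A] A.indicator (μ[ψ τh θ | mθ]) :=
                (iA _).symm
            _ =ᵐ[μ.restrict A] μ[A.indicator (ψ τh θ) | mθ] :=
                MeasureTheory.ae_restrict_of_ae i1.symm
        have e2 : μ[A.indicator (ψ τh θ) | mθ] =ᵐ[μ] μ[A.indicator (ψ τ'' θ') | mθ] :=
          MeasureTheory.condExp_congr_ae hind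
        have e3 : μ[A.indicator (ψ τ'' θ') | mθ] =ᵐ[μ.restrict A]
            μ[A.indicator (ψ τ'' θ') | mθ'] :=
          MeasureTheory.condExp_ae_eq_restrict_of_measurableSpace_eq_on hmθle hmθ'le hAθ
            (fun t => measurableSet_inter_eq_stopping_time_iff hθ.1 hθ'.1 t)
        have e4 : μ[A.indicator (ψ τ'' θ') | mθ'] =ᵐ[μ.restrict A] μ[ψ τ'' θ' | mθ'] := by
          have i1 : μ[A.indicator (ψ τ'' θ') | mθ'] =ᵐ[μ] A.indicator (μ[ψ τ'' θ' | mθ']) :=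
            MeasureTheory.condExp_indicator hintτ'' hAθ'
          calc μ[A.indicator (ψ τ'' θ') | mθ'] =ᵐ[μ.restrict A]
              A.indicator (μ[ψ τ'' θ' | mθ']) := MeasureTheory.ae_restrict_of_ae i1
            _ =ᵐ[μ.restrict A] μ[ψ τ'' θ' | mθ'] := iA _
        have e5 : μ[ψ τ'' θ' | mθ'] ≤ᵐ[μ] u θ' := (hu θ' hθ').1 τ'' ⟨hτ''T0, hθ'τ''⟩
        have hres : ∀ᵐ ω ∂μ.restrict A, (μ[ψ τ θ | mθ]) ω ≤ u θ' ω := by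
          filter_upwards [MeasureTheory.ae_restrict_of_ae hcongr, e1,
            MeasureTheory.ae_restrict_of_ae e2, e3, e4,
            MeasureTheory.ae_restrict_of_ae e5] with ω a1 a2 a3 a4 a5 a6
          rw [a1, a2, a3, a4, a5]; exact a6
        have h1 := MeasureTheory.ae_imp_of_ae_restrict hres
        have h2 : μ[ψ τ θ | mθ] ≤ᵐ[μ] u θ := (hu θ hθ).1 τ ⟨hτ, hθτ⟩
        filter_upwards [h1, h2] with ω hω1 hω2
        by_cases hω : θ ω = θ' ω
        · simp only [hWdef, if_pos hω]
          exact hω1 hω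
        · simp only [hWdef, if_neg hω]
          exact hω2
      have hle := (hu θ hθ).2 W hub
      filter_upwards [hle] with ω hω h
      simp only [hWdef, if_pos h] at hω
      exact hω
    intro θ θ' hθ hθ'
    filter_upwards [side θ θ' hθ hθ', side θ' θ hθ' hθ] with ω h1 h2 h
    exact le_antisymm (h1 h) (h2 h.symm)

end AuxLemmas

/-- For a biadmissible family `ψ`, the families
`u₁(θ) = ess sup_{τ₁ ∈ T_θ} E[ψ(τ₁, θ) | F_θ]`, `u₂(θ) = ess sup_{τ₂ ∈ T_θ} E[ψ(θ, τ₂) | F_θ]`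
and the new reward `φ(θ) = max(u₁(θ), u₂(θ))` are admissible families of
nonnegative random variables. -/
theorem new_reward_admissible
    {m0 : MeasurableSpace Ω} (μ : Measure Ω) [IsProbabilityMeasure μ]
    (𝓕 : Filtration ℝ m0) (T : ℝ) (hT : 0 ≤ T)
    (hFright : ∀ t : ℝ, 𝓕 t = ⨅ s ∈ Set.Ioi t, 𝓕 s)
    (hFnull : ∀ A : Set Ω, μ A = 0 → MeasurableSet[𝓕 0] A)
    (ψ : (Ω → ℝ) → (Ω → ℝ) → Ω → ℝ)
    (hψ : Biadmissible 𝓕 T μ ψ)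
    (hψint : ∀ τ₁ τ₂, MemT0 𝓕 T τ₁ → MemT0 𝓕 T τ₂ → Integrable (ψ τ₁ τ₂) μ)
    (u₁ u₂ : (Ω → ℝ) → Ω → ℝ)
    (hu₁ : ∀ θ (hθ : MemT0 𝓕 T θ),
      IsEssSupFam μ (fun τ => MemT0 𝓕 T τ ∧ θ ≤ᵐ[μ] τ)
        (fun τ => μ[ψ τ θ | hθ.1.measurableSpace]) (u₁ θ))
    (hu₂ : ∀ θ (hθ : MemT0 𝓕 T θ),
      IsEssSupFam μ (fun τ => MemT0 𝓕 T τ ∧ θ ≤ᵐ[μ] τ)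
        (fun τ => μ[ψ θ τ | hθ.1.measurableSpace]) (u₂ θ)) :
    AdmissibleAE 𝓕 T μ u₁ ∧ AdmissibleAE 𝓕 T μ u₂ ∧
    AdmissibleAE 𝓕 T μ (fun θ ω => max (u₁ θ ω) (u₂ θ ω)) := by
  have h1 : AdmissibleAE 𝓕 T μ u₁ := admissibleAE_of_essSupFam μ 𝓕 T ψ hψ hψint u₁ hu₁
  have hψ' : Biadmissible 𝓕 T μ (fun a b => ψ b a) := by
    constructor
    · intro τ S hτ hS
      obtain ⟨hm, hnn⟩ := hψ.1 S τ hS hτ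
      refine ⟨?_, hnn⟩
      have hms : (hS.1.max hτ.1).measurableSpace = (hτ.1.max hS.1).measurableSpace :=
        stoppingTime_measurableSpace_congr (hS.1.max hτ.1) (hτ.1.max hS.1)
          (fun ω => max_comm _ _)
      rw [← hms]
      exact hm
    · intro τ τ' S S' hτ hτ' hS hS'
      filter_upwards [hψ.2 S S' τ τ' hS hS' hτ hτ'] with ω h ha hb
      exact h hb ha
  have hψ'int : ∀ τ₁ τ₂, MemT0 𝓕 T τ₁ → MemT0 𝓕 T τ₂ →
      Integrable ((fun a b => ψ b a) τ₁ τ₂) μ :=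
    fun τ₁ τ₂ ha hb => hψint τ₂ τ₁ hb ha
  have h2 : AdmissibleAE 𝓕 T μ u₂ :=
    admissibleAE_of_essSupFam μ 𝓕 T (fun a b => ψ b a) hψ' hψ'int u₂ hu₂
  refine ⟨h1, h2, ?_, ?_⟩
  · intro θ hθ
    obtain ⟨hn1, w1, hw1m, hw1e⟩ := h1.1 θ hθ
    obtain ⟨hn2, w2, hw2m, hw2e⟩ := h2.1 θ hθ
    refine ⟨?_, ⟨fun ω => max (w1 ω) (w2 ω), hw1m.max hw2m, ?_⟩⟩
    · filter_upwards [hn1, hn2] with ω a b using le_trans a (le_max_left _ _)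
    · filter_upwards [hw1e, hw2e] with ω a b
      rw [a, b]
  · intro θ θ' hθ hθ'
    filter_upwards [h1.2 θ θ' hθ hθ', h2.2 θ θ' hθ hθ'] with ω a b h
    rw [a h, b h]
end

section
/- Let {ψ(θ,S), θ,S ∈ T_0} be a biadmissible family of nonnegative integrable random variables. For θ ∈ T_0 set u_1(θ) = ess sup_{τ_1 ∈ T_θ} E[ψ(τ_1, θ) | F_θ], u_2(θ) = ess sup_{τ_2 ∈ T_θ} E[ψ(θ, τ_2) | F_θ], and φ(θ) = max(u_1(θ), u_2(θ)). Then for every S ∈ T_0 and all τ_1, τ_2 ∈ T_S, E[ψ(τ_1, τ_2) | F_S] ≤ E[φ(τ_1 ∧ τ_2) | F_S] almost surely; consequently v(S) := ess sup_{τ_1,τ_2 ∈ T_S} E[ψ(τ_1,τ_2) | F_S] ≤ u(S) := ess sup_{θ ∈ T_S} E[φ(θ) | F_S] a.s. -/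
open MeasureTheory Filter Set Topology

variable {Ω : Type*}

/-- If two nonnegative stopping times agree a.e. and the filtration contains the null
sets at time `0`, then the σ-algebra of the first is contained in that of the second. -/
lemma measurableSpace_le_of_ae_eq {m0 : MeasurableSpace Ω} (μ : Measure Ω)
    (𝓕 : Filtration ℝ m0)
    (hFnull : ∀ A : Set Ω, μ A = 0 → MeasurableSet[𝓕 0] A)
    {σ τ : Ω → ℝ} (hσ : IsStoppingTime 𝓕 (fun ω => (σ ω : WithTop ℝ)))
    (hτ : IsStoppingTime 𝓕 (fun ω => (τ ω : WithTop ℝ)))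
    (hτ0 : ∀ ω, 0 ≤ τ ω) (h : σ =ᵐ[μ] τ) :
    hσ.measurableSpace ≤ hτ.measurableSpace := by
  intro s hs
  rw [hτ.measurableSet]
  refine ⟨hs.1, fun t => ?_⟩
  by_cases ht : 0 ≤ t
  swap
  · have : s ∩ {ω | (τ ω : WithTop ℝ) ≤ t} = ∅ := by
      ext ω
      simp only [Set.mem_inter_iff, Set.mem_setOf_eq, Set.mem_empty_iff_false, iff_false]
      rintro ⟨-, hle⟩
      exact ht (le_trans (hτ0 ω) (WithTop.coe_le_coe.mp hle))
    rw [this]; exact @MeasurableSet.empty _ (𝓕 t)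
  · have hN : μ {ω | ¬ σ ω = τ ω} = 0 := ae_iff.mp h
    have hnull : ∀ B : Set Ω, B ⊆ {ω | ¬ σ ω = τ ω} → MeasurableSet[𝓕 t] B := fun B hB =>
      𝓕.mono ht _ (hFnull B (measure_mono_null hB hN))
    have hkey : s ∩ {ω | (τ ω : WithTop ℝ) ≤ t} =
        ((s ∩ {ω | (σ ω : WithTop ℝ) ≤ t}) \ {ω | ¬ σ ω = τ ω}) ∪
          (s ∩ {ω | (τ ω : WithTop ℝ) ≤ t} ∩ {ω | ¬ σ ω = τ ω}) := by
      ext ω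
      by_cases hω : σ ω = τ ω <;>
        simp [Set.mem_inter_iff, Set.mem_diff, Set.mem_setOf_eq, hω]
    rw [hkey]
    exact ((hs.2 t).diff (hnull _ Set.Subset.rfl)).union
      (hnull _ Set.inter_subset_right)

/-- (Step 1 of the reduction theorem) With
`u₁(θ) = ess sup_{τ₁ ∈ T_θ} E[ψ(τ₁, θ) | F_θ]`, `u₂(θ) = ess sup_{τ₂ ∈ T_θ} E[ψ(θ, τ₂) | F_θ]`
and `φ(θ) = max(u₁(θ), u₂(θ))`, one has for all `τ₁, τ₂ ∈ T_S` that
`E[ψ(τ₁,τ₂) | F_S] ≤ E[φ(τ₁ ∧ τ₂) | F_S]` a.s.; consequently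
`v(S) = ess sup_{τ₁,τ₂ ∈ T_S} E[ψ(τ₁,τ₂) | F_S] ≤ u(S) = ess sup_{θ ∈ T_S} E[φ(θ) | F_S]` a.s. -/
theorem reduction_step_one
    {m0 : MeasurableSpace Ω} (μ : Measure Ω) [IsProbabilityMeasure μ]
    (𝓕 : Filtration ℝ m0) (T : ℝ) (hT : 0 ≤ T)
    (hFright : ∀ t : ℝ, 𝓕 t = ⨅ s ∈ Set.Ioi t, 𝓕 s)
    (hFnull : ∀ A : Set Ω, μ A = 0 → MeasurableSet[𝓕 0] A)
    (ψ : (Ω → ℝ) → (Ω → ℝ) → Ω → ℝ)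
    (hψ : Biadmissible 𝓕 T μ ψ)
    (hψint : ∀ τ₁ τ₂, MemT0 𝓕 T τ₁ → MemT0 𝓕 T τ₂ → Integrable (ψ τ₁ τ₂) μ)
    (u₁ u₂ : (Ω → ℝ) → Ω → ℝ)
    (hu₁ : ∀ θ (hθ : MemT0 𝓕 T θ),
      IsEssSupFam μ (fun τ => MemT0 𝓕 T τ ∧ θ ≤ᵐ[μ] τ)
        (fun τ => μ[ψ τ θ | hθ.1.measurableSpace]) (u₁ θ))
    (hu₂ : ∀ θ (hθ : MemT0 𝓕 T θ),
      IsEssSupFam μ (fun τ => MemT0 𝓕 T τ ∧ θ ≤ᵐ[μ] τ)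
        (fun τ => μ[ψ θ τ | hθ.1.measurableSpace]) (u₂ θ))
    (hu₁int : ∀ θ, MemT0 𝓕 T θ → Integrable (u₁ θ) μ)
    (hu₂int : ∀ θ, MemT0 𝓕 T θ → Integrable (u₂ θ) μ) :
    ∀ S (hS : MemT0 𝓕 T S),
      (∀ τ₁ τ₂, MemT0 𝓕 T τ₁ → MemT0 𝓕 T τ₂ → S ≤ᵐ[μ] τ₁ → S ≤ᵐ[μ] τ₂ →
        μ[ψ τ₁ τ₂ | hS.1.measurableSpace] ≤ᵐ[μ]
          μ[fun ω => max (u₁ (fun x => min (τ₁ x) (τ₂ x)) ω)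
              (u₂ (fun x => min (τ₁ x) (τ₂ x)) ω) | hS.1.measurableSpace]) ∧
      ∀ vS uS : Ω → ℝ,
        IsEssSupFam μ
          (fun p : (Ω → ℝ) × (Ω → ℝ) =>
            MemT0 𝓕 T p.1 ∧ MemT0 𝓕 T p.2 ∧ S ≤ᵐ[μ] p.1 ∧ S ≤ᵐ[μ] p.2)
          (fun p => μ[ψ p.1 p.2 | hS.1.measurableSpace]) vS →
        IsEssSupFam μ (fun θ => MemT0 𝓕 T θ ∧ S ≤ᵐ[μ] θ)
          (fun θ => μ[fun ω => max (u₁ θ ω) (u₂ θ ω) | hS.1.measurableSpace]) uS →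
        vS ≤ᵐ[μ] uS := by
  intro S hS
  have hmemθ : ∀ τ₁ τ₂ : Ω → ℝ, MemT0 𝓕 T τ₁ → MemT0 𝓕 T τ₂ →
      MemT0 𝓕 T (fun x => min (τ₁ x) (τ₂ x)) := fun τ₁ τ₂ h1 h2 =>
    ⟨by simpa only [WithTop.coe_min] using h1.1.min h2.1, fun ω => ⟨le_min (h1.2 ω).1 (h2.2 ω).1,
      le_trans (min_le_left _ _) (h1.2 ω).2⟩⟩
  have part1 : ∀ τ₁ τ₂, MemT0 𝓕 T τ₁ → MemT0 𝓕 T τ₂ → S ≤ᵐ[μ] τ₁ → S ≤ᵐ[μ] τ₂ →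
      μ[ψ τ₁ τ₂ | hS.1.measurableSpace] ≤ᵐ[μ]
        μ[fun ω => max (u₁ (fun x => min (τ₁ x) (τ₂ x)) ω)
            (u₂ (fun x => min (τ₁ x) (τ₂ x)) ω) | hS.1.measurableSpace] := by
    intro τ₁ τ₂ hτ₁ hτ₂ hS1 hS2
    set θ : Ω → ℝ := fun x => min (τ₁ x) (τ₂ x) with hθdef
    have hθ : MemT0 𝓕 T θ := hmemθ τ₁ τ₂ hτ₁ hτ₂
    set mθ := hθ.1.measurableSpace with hmθdef
    have hθle : mθ ≤ m0 := hθ.1.measurableSpace_le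
    have hSθ : S ≤ᵐ[μ] θ := by
      filter_upwards [hS1, hS2] with ω h1 h2 using le_min h1 h2
    have hmin : IsStoppingTime 𝓕 fun ω => ((min (S ω) (θ ω) : ℝ) : WithTop ℝ) := by
      simpa only [WithTop.coe_min] using hS.1.min hθ.1
    have hSm : S =ᵐ[μ] fun ω => min (S ω) (θ ω) := by
      filter_upwards [hSθ] with ω h using (min_eq_left h).symm
    have hle : hS.1.measurableSpace ≤ mθ :=
      le_trans
        (measurableSpace_le_of_ae_eq μ 𝓕 hFnull hS.1 hmin
          (fun ω => le_min (hS.2 ω).1 (le_min (hτ₁.2 ω).1 (hτ₂.2 ω).1)) hSm)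
        (IsStoppingTime.measurableSpace_mono hmin hθ.1 fun ω => WithTop.coe_le_coe.mpr (min_le_right _ _))
    set A : Set Ω := {ω | τ₁ ω ≤ τ₂ ω} with hAdef
    have hA : MeasurableSet[mθ] A := by
      have h := (IsStoppingTime.measurableSet_min_iff hτ₁.1 hτ₂.1 A).2
        ⟨by simpa only [WithTop.coe_le_coe] using hτ₁.1.measurableSet_le_stopping_time hτ₂.1,
          by simpa only [WithTop.coe_le_coe] using hτ₁.1.measurableSet_stopping_time_le hτ₂.1⟩
      rw [hmθdef, IsStoppingTime.measurableSet]
      rw [IsStoppingTime.measurableSet] at h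
      simpa only [hθdef, WithTop.coe_min] using h
    have hub₁ : μ[ψ τ₁ θ | mθ] ≤ᵐ[μ] u₁ θ :=
      (hu₁ θ hθ).1 τ₁ ⟨hτ₁, ae_of_all _ fun ω => min_le_left _ _⟩
    have hub₂ : μ[ψ θ τ₂ | mθ] ≤ᵐ[μ] u₂ θ :=
      (hu₂ θ hθ).1 τ₂ ⟨hτ₂, ae_of_all _ fun ω => min_le_right _ _⟩
    have heq1 : A.indicator (ψ τ₁ τ₂) =ᵐ[μ] A.indicator (ψ θ τ₂) := by
      filter_upwards [hψ.2 τ₁ θ τ₂ τ₂ hτ₁ hθ hτ₂ hτ₂] with ω hω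
      by_cases hm : ω ∈ A
      · rw [Set.indicator_of_mem hm, Set.indicator_of_mem hm]
        exact hω (min_eq_left hm).symm rfl
      · rw [Set.indicator_of_notMem hm, Set.indicator_of_notMem hm]
    have heq2 : Aᶜ.indicator (ψ τ₁ τ₂) =ᵐ[μ] Aᶜ.indicator (ψ τ₁ θ) := by
      filter_upwards [hψ.2 τ₁ τ₁ τ₂ θ hτ₁ hτ₁ hτ₂ hθ] with ω hω
      by_cases hm : ω ∈ Aᶜ
      · rw [Set.indicator_of_mem hm, Set.indicator_of_mem hm]
        exact hω rfl (min_eq_right (le_of_lt (lt_of_not_ge (Set.mem_compl_iff A ω |>.mp hm)))).symm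
      · rw [Set.indicator_of_notMem hm, Set.indicator_of_notMem hm]
    have hψ12 := hψint τ₁ τ₂ hτ₁ hτ₂
    have h1 : A.indicator (μ[ψ τ₁ τ₂ | mθ]) ≤ᵐ[μ] A.indicator (u₂ θ) := by
      calc A.indicator (μ[ψ τ₁ τ₂ | mθ])
          =ᵐ[μ] μ[A.indicator (ψ τ₁ τ₂) | mθ] := (condExp_indicator hψ12 hA).symm
        _ =ᵐ[μ] μ[A.indicator (ψ θ τ₂) | mθ] := condExp_congr_ae heq1
        _ =ᵐ[μ] A.indicator (μ[ψ θ τ₂ | mθ]) := condExp_indicator (hψint θ τ₂ hθ hτ₂) hA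
        _ ≤ᵐ[μ] A.indicator (u₂ θ) := by
            filter_upwards [hub₂] with ω h
            by_cases hm : ω ∈ A
            · rwa [Set.indicator_of_mem hm, Set.indicator_of_mem hm]
            · rw [Set.indicator_of_notMem hm, Set.indicator_of_notMem hm]
    have h2 : Aᶜ.indicator (μ[ψ τ₁ τ₂ | mθ]) ≤ᵐ[μ] Aᶜ.indicator (u₁ θ) := by
      calc Aᶜ.indicator (μ[ψ τ₁ τ₂ | mθ])
          =ᵐ[μ] μ[Aᶜ.indicator (ψ τ₁ τ₂) | mθ] := (condExp_indicator hψ12 hA.compl).symm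
        _ =ᵐ[μ] μ[Aᶜ.indicator (ψ τ₁ θ) | mθ] := condExp_congr_ae heq2
        _ =ᵐ[μ] Aᶜ.indicator (μ[ψ τ₁ θ | mθ]) := condExp_indicator (hψint τ₁ θ hτ₁ hθ) hA.compl
        _ ≤ᵐ[μ] Aᶜ.indicator (u₁ θ) := by
            filter_upwards [hub₁] with ω h
            by_cases hm : ω ∈ Aᶜ
            · rwa [Set.indicator_of_mem hm, Set.indicator_of_mem hm]
            · rw [Set.indicator_of_notMem hm, Set.indicator_of_notMem hm]
    have hkey : μ[ψ τ₁ τ₂ | mθ] ≤ᵐ[μ] fun ω => max (u₁ θ ω) (u₂ θ ω) := by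
      filter_upwards [h1, h2] with ω hω1 hω2
      by_cases hm : ω ∈ A
      · rw [Set.indicator_of_mem hm, Set.indicator_of_mem hm] at hω1
        exact le_trans hω1 (le_max_right _ _)
      · have hm' : ω ∈ Aᶜ := hm
        rw [Set.indicator_of_mem hm', Set.indicator_of_mem hm'] at hω2
        exact le_trans hω2 (le_max_left _ _)
    have hmaxint : Integrable (fun ω => max (u₁ θ ω) (u₂ θ ω)) μ := by
      have := (hu₁int θ hθ).sup (hu₂int θ hθ)
      exact this
    calc μ[ψ τ₁ τ₂ | hS.1.measurableSpace]
        =ᵐ[μ] μ[μ[ψ τ₁ τ₂ | mθ] | hS.1.measurableSpace] :=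
          (condExp_condExp_of_le hle hθle).symm
      _ ≤ᵐ[μ] μ[fun ω => max (u₁ θ ω) (u₂ θ ω) | hS.1.measurableSpace] :=
          condExp_mono integrable_condExp hmaxint hkey
  refine ⟨part1, fun vS uS hvS huS => hvS.2 uS ?_⟩
  rintro ⟨p₁, p₂⟩ ⟨hp₁, hp₂, hp₁S, hp₂S⟩
  refine (part1 p₁ p₂ hp₁ hp₂ hp₁S hp₂S).trans (huS.1 _ ⟨hmemθ p₁ p₂ hp₁ hp₂, ?_⟩)
  filter_upwards [hp₁S, hp₂S] with ω h1 h2 using le_min h1 h2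
end

section
/- (Reduction theorem) Let {ψ(θ,S), θ,S ∈ T_0} be a biadmissible family of nonnegative integrable random variables. For θ ∈ T_0 set u_1(θ) = ess sup_{τ_1 ∈ T_θ} E[ψ(τ_1, θ) | F_θ], u_2(θ) = ess sup_{τ_2 ∈ T_θ} E[ψ(θ, τ_2) | F_θ], and φ(θ) = max(u_1(θ), u_2(θ)). Then for every stopping time S ∈ T_0, the double-stopping value function v(S) = ess sup_{τ_1,τ_2 ∈ T_S} E[ψ(τ_1,τ_2) | F_S] coincides almost surely with the single-stopping value function u(S) = ess sup_{θ ∈ T_S} E[φ(θ) | F_S]. -/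
open MeasureTheory Filter Set Topology

variable {Ω : Type*}

section ReductionHelpers

open scoped Classical in
/-- Piecewise of two stopping times dominating `θ`, on an `F_θ`-measurable set. -/
lemma isStoppingTime_piecewise {m0 : MeasurableSpace Ω} {𝓕 : Filtration ℝ m0}
    {θ τ σ : Ω → ℝ} (hθ : IsStoppingTime 𝓕 (fun ω => (θ ω : WithTop ℝ)))
    (hτ : IsStoppingTime 𝓕 (fun ω => (τ ω : WithTop ℝ)))
    (hσ : IsStoppingTime 𝓕 (fun ω => (σ ω : WithTop ℝ))) (hθτ : ∀ ω, θ ω ≤ τ ω) (hθσ : ∀ ω, θ ω ≤ σ ω)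
    {A : Set Ω} (hA : MeasurableSet[hθ.measurableSpace] A) :
    IsStoppingTime 𝓕 (fun ω => (A.piecewise τ σ ω : WithTop ℝ)) := by
  intro t
  simp only [WithTop.coe_le_coe]
  have h1 : {ω | A.piecewise τ σ ω ≤ t}
      = ((A ∩ {ω | θ ω ≤ t}) ∩ {ω | τ ω ≤ t}) ∪ ((Aᶜ ∩ {ω | θ ω ≤ t}) ∩ {ω | σ ω ≤ t}) := by
    ext ω
    by_cases hω : ω ∈ A <;>
      simp only [Set.piecewise, hω, if_true, if_false, Set.mem_setOf_eq, Set.mem_union,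
        Set.mem_inter_iff, Set.mem_compl_iff, not_true, not_false_iff, and_true, and_false,
        false_and, true_and, or_false, false_or] <;>
      exact ⟨fun h => ⟨(by first | exact (hθτ ω).trans h | exact (hθσ ω).trans h), h⟩,
        fun h => h.2⟩
  rw [h1]
  have h2 := ((((hθ.measurableSet A).1 hA).2 t).inter (hτ t)).union
    ((((hθ.measurableSet _).1 hA.compl).2 t).inter (hσ t))
  simpa only [WithTop.coe_le_coe] using h2

/-- Locality of conditional expectation: if `f = g` a.e. on an `m`-measurable set `A`,
then `μ[f|m] = μ[g|m]` a.e. on `A`. -/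
lemma condexp_eqOn_of_eqOn {m0 : MeasurableSpace Ω} {μ : Measure Ω}
    {m : MeasurableSpace Ω} (hm : m ≤ m0) [SigmaFinite (μ.trim hm)]
    {f g : Ω → ℝ} (hf : Integrable f μ) (hg : Integrable g μ)
    {A : Set Ω} (hA : MeasurableSet[m] A) (hfg : ∀ᵐ ω ∂μ, ω ∈ A → f ω = g ω) :
    ∀ᵐ ω ∂μ, ω ∈ A → (μ[f|m]) ω = (μ[g|m]) ω := by
  have h1 : A.indicator f =ᵐ[μ] A.indicator g := by
    filter_upwards [hfg] with ω h
    by_cases hω : ω ∈ A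
    · simp [Set.indicator_of_mem hω, h hω]
    · simp [Set.indicator_of_notMem hω]
  have h2 : A.indicator (μ[f|m]) =ᵐ[μ] A.indicator (μ[g|m]) :=
    (condExp_indicator hf hA).symm.trans ((condExp_congr_ae h1).trans (condExp_indicator hg hA))
  filter_upwards [h2] with ω h hω
  simpa [Set.indicator_of_mem hω] using h

/-- The `σ`-algebras of two a.e. equal nonnegative stopping times coincide, when all
null sets belong to `𝓕 0`. -/
lemma stoppingTime_measurableSpace_le_of_ae_eq {m0 : MeasurableSpace Ω} {μ : Measure Ω}
    {𝓕 : Filtration ℝ m0} (hFnull : ∀ A : Set Ω, μ A = 0 → MeasurableSet[𝓕 0] A)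
    {θ θ' : Ω → ℝ} (hθ : IsStoppingTime 𝓕 (fun ω => (θ ω : WithTop ℝ)))
    (hθ' : IsStoppingTime 𝓕 (fun ω => (θ' ω : WithTop ℝ)))
    (h0' : ∀ ω, 0 ≤ θ' ω) (h : θ =ᵐ[μ] θ') :
    hθ.measurableSpace ≤ hθ'.measurableSpace := by
  intro A hA
  refine (hθ'.measurableSet A).2 ⟨((hθ.measurableSet A).1 hA).1, fun t => ?_⟩
  have hAt := ((hθ.measurableSet A).1 hA).2 t
  simp only [WithTop.coe_le_coe] at hAt ⊢
  rcases lt_or_ge t 0 with ht | ht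
  · have : A ∩ {ω | θ' ω ≤ t} = ∅ := by
      ext ω; simp only [Set.mem_inter_iff, Set.mem_setOf_eq, Set.mem_empty_iff_false,
        iff_false, not_and]
      exact fun _ h' => absurd (le_trans (h0' ω) h') (not_le.2 ht)
    rw [this]; exact @MeasurableSet.empty _ (𝓕 t)
  · set N := {ω | ¬ θ ω = θ' ω} with hN
    have hμN : μ N = 0 := h
    have hkey : A ∩ {ω | θ' ω ≤ t}
        = ((A ∩ {ω | θ ω ≤ t}) ∩ Nᶜ) ∪ ((A ∩ {ω | θ' ω ≤ t}) ∩ N) := by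
      ext ω
      simp only [Set.mem_inter_iff, Set.mem_setOf_eq, Set.mem_union, Set.mem_compl_iff,
        hN, not_not]
      constructor
      · rintro ⟨hA', hle⟩
        by_cases hω : θ ω = θ' ω
        · exact Or.inl ⟨⟨hA', hω ▸ hle⟩, hω⟩
        · exact Or.inr ⟨⟨hA', hle⟩, hω⟩
      · rintro (⟨⟨hA', hle⟩, hω⟩ | ⟨⟨hA', hle⟩, _⟩)
        · exact ⟨hA', hω ▸ hle⟩
        · exact ⟨hA', hle⟩
    rw [hkey]
    refine MeasurableSet.union (MeasurableSet.inter hAt ?_) ?_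
    · exact 𝓕.mono ht _ ((hFnull N hμN).compl)
    · exact 𝓕.mono ht _ (hFnull _ (measure_mono_null Set.inter_subset_right hμN))

/-- An essential supremum of a family of `m`-conditional expectations is a.e. equal
to its own `m`-conditional expectation. -/
lemma isEssSupFam_condexp_self {m0 : MeasurableSpace Ω} {μ : Measure Ω}
    [IsFiniteMeasure μ] {m : MeasurableSpace Ω} (hm : m ≤ m0)
    {ι : Sort*} {P : ι → Prop} {f : ι → Ω → ℝ} {v : Ω → ℝ}
    (hv : IsEssSupFam μ P f v) (hvi : Integrable v μ)
    (hf : ∀ i, P i → μ[f i | m] =ᵐ[μ] f i) (hfi : ∀ i, P i → Integrable (f i) μ) :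
    v =ᵐ[μ] μ[v|m] := by
  haveI : SigmaFinite (μ.trim hm) := (isFiniteMeasure_trim hm).toSigmaFinite
  have hub : ∀ i, P i → f i ≤ᵐ[μ] μ[v|m] := fun i hi =>
    (hf i hi).symm.le.trans (condExp_mono (hfi i hi) hvi (hv.1 i hi))
  have h1 : v ≤ᵐ[μ] μ[v|m] := hv.2 _ hub
  have h2 : ∫ ω, ((μ[v|m]) ω - v ω) ∂μ = 0 := by
    rw [integral_sub integrable_condExp hvi, integral_condExp hm, sub_self]
  have h3 : (fun ω => (μ[v|m]) ω - v ω) =ᵐ[μ] 0 := by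
    refine (integral_eq_zero_iff_of_nonneg_ae ?_ (integrable_condExp.sub hvi)).1 h2
    filter_upwards [h1] with ω h using sub_nonneg.2 h
  filter_upwards [h3] with ω h
  have h' : (μ[v|m]) ω - v ω = 0 := h
  linarith

open Real in
/-- From an upward directed family with an essential supremum one can extract a
monotone sequence converging a.e. to the essential supremum. -/
lemma exists_seq_tendsto_isEssSupFam {m0 : MeasurableSpace Ω} {μ : Measure Ω}
    [IsFiniteMeasure μ] {ι : Type*} {P : ι → Prop} {f : ι → Ω → ℝ} {v : Ω → ℝ}
    (hne : ∃ i, P i) (hmeas : ∀ i, P i → Measurable[m0] (f i))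
    (hdir : ∀ i j, P i → P j → ∃ k, P k ∧ f i ≤ᵐ[μ] f k ∧ f j ≤ᵐ[μ] f k)
    (hv : IsEssSupFam μ P f v) :
    ∃ g : ℕ → ι, (∀ n, P (g n)) ∧
      ∀ᵐ ω ∂μ, (∀ n, f (g n) ω ≤ f (g (n + 1)) ω) ∧
        Tendsto (fun n => f (g n) ω) atTop (nhds (v ω)) := by
  classical
  set a : ι → Ω → ℝ := fun i ω => arctan (f i ω) with ha
  have habs : ∀ (i : ι) ω, |a i ω| ≤ π / 2 := fun i ω => by
    rw [abs_le]
    exact ⟨(neg_pi_div_two_lt_arctan _).le, (arctan_lt_pi_div_two _).le⟩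
  have hameas : ∀ i, P i → Measurable[m0] (a i) := fun i hi =>
    Real.continuous_arctan.measurable.comp (hmeas i hi)
  have haint : ∀ i, P i → Integrable (a i) μ := fun i hi =>
    (integrable_const (π / 2)).mono' (hameas i hi).aestronglyMeasurable
      (ae_of_all _ fun ω => by rw [Real.norm_eq_abs]; exact habs i ω)
  set s : Set ℝ := (fun i => ∫ ω, a i ω ∂μ) '' {i | P i} with hs
  have hsne : s.Nonempty := ⟨_, hne.choose, hne.choose_spec, rfl⟩
  have hsbdd : BddAbove s := by
    refine ⟨(μ Set.univ).toReal * (π / 2), ?_⟩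
    rintro x ⟨i, hi, rfl⟩
    calc ∫ ω, a i ω ∂μ ≤ ∫ _ω, (π / 2 : ℝ) ∂μ := by
          refine integral_mono (haint i hi) (integrable_const _) fun ω => ?_
          exact (le_abs_self _).trans (habs i ω)
      _ = (μ Set.univ).toReal * (π / 2) := by rw [integral_const]; simp [smul_eq_mul, Measure.real]
  set c : ℝ := sSup s with hc
  have hle_c : ∀ i, P i → ∫ ω, a i ω ∂μ ≤ c := fun i hi => le_csSup hsbdd ⟨i, hi, rfl⟩
  have hj : ∀ n : ℕ, ∃ i, P i ∧ c - 1 / (n + 1) < ∫ ω, a i ω ∂μ := by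
    intro n
    have hlt : c - 1 / (n + 1 : ℝ) < c := by
      have : (0 : ℝ) < 1 / (n + 1) := by positivity
      linarith
    obtain ⟨x, ⟨i, hi, rfl⟩, hx⟩ := exists_lt_of_lt_csSup hsne hlt
    exact ⟨i, hi, hx⟩
  choose j hjP hjlt using hj
  let g : ℕ → {i : ι // P i} := fun n =>
    Nat.rec ⟨j 0, hjP 0⟩ (fun n p =>
      ⟨(hdir p.1 (j (n + 1)) p.2 (hjP (n + 1))).choose,
        (hdir p.1 (j (n + 1)) p.2 (hjP (n + 1))).choose_spec.1⟩) n
  have hgP : ∀ n, P (g n).1 := fun n => (g n).2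
  have hgmono : ∀ n, f (g n).1 ≤ᵐ[μ] f (g (n + 1)).1 := fun n =>
    (hdir (g n).1 (j (n + 1)) (g n).2 (hjP (n + 1))).choose_spec.2.1
  have hjg : ∀ n, f (j n) ≤ᵐ[μ] f (g n).1 := by
    intro n
    cases n with
    | zero => exact Filter.EventuallyLE.refl _ _
    | succ n => exact (hdir (g n).1 (j (n + 1)) (g n).2 (hjP (n + 1))).choose_spec.2.2
  have hamono : ∀ {i k : ι}, f i ≤ᵐ[μ] f k → a i ≤ᵐ[μ] a k := fun h =>
    h.mono fun ω hω => arctan_strictMono.monotone hω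
  have hIg_tendsto : Tendsto (fun n => ∫ ω, a (g n).1 ω ∂μ) atTop (nhds c) := by
    refine tendsto_of_tendsto_of_tendsto_of_le_of_le
      (g := fun n : ℕ => c - 1 / (n + 1)) (h := fun _ : ℕ => c) ?_ tendsto_const_nhds ?_ ?_
    · have : Tendsto (fun n : ℕ => 1 / ((n : ℝ) + 1)) atTop (nhds 0) :=
        tendsto_one_div_add_atTop_nhds_zero_nat
      simpa using tendsto_const_nhds.sub this
    · intro n
      exact le_trans (hjlt n).le (integral_mono_ae (haint _ (hjP n)) (haint _ (hgP n))
        (hamono (hjg n)))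
    · exact fun n => hle_c _ (hgP n)
  set B : Ω → ℝ := fun ω => ⨆ n, a (g n).1 ω with hB
  have hBdd : ∀ ω, BddAbove (Set.range fun n => a (g n).1 ω) := fun ω =>
    ⟨π / 2, by rintro x ⟨n, rfl⟩; exact (le_abs_self _).trans (habs _ ω)⟩
  have haB : ∀ n ω, a (g n).1 ω ≤ B ω := fun n ω => le_ciSup (hBdd ω) n
  have hBle : ∀ ω, B ω ≤ π / 2 := fun ω =>
    ciSup_le fun n => (arctan_lt_pi_div_two _).le
  have hBgt : ∀ ω, -(π / 2) < B ω := fun ω =>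
    lt_of_lt_of_le (neg_pi_div_two_lt_arctan _) (haB 0 ω)
  have hBmeas : Measurable[m0] B := Measurable.iSup fun n => hameas _ (hgP n)
  have hBint : Integrable B μ :=
    (integrable_const (π / 2)).mono' hBmeas.aestronglyMeasurable
      (ae_of_all _ fun ω => by
        rw [Real.norm_eq_abs, abs_le]
        exact ⟨(hBgt ω).le, hBle ω⟩)
  have hgmono_ae : ∀ᵐ ω ∂μ, ∀ n, f (g n).1 ω ≤ f (g (n + 1)).1 ω :=
    ae_all_iff.2 fun n => hgmono n
  have htendB : ∀ᵐ ω ∂μ, Tendsto (fun n => a (g n).1 ω) atTop (nhds (B ω)) := by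
    filter_upwards [hgmono_ae] with ω hmono
    exact tendsto_atTop_ciSup
      (monotone_nat_of_le_succ fun n => arctan_strictMono.monotone (hmono n)) (hBdd ω)
  have hfv_ae : ∀ᵐ ω ∂μ, ∀ n, f (g n).1 ω ≤ v ω := ae_all_iff.2 fun n => hv.1 _ (hgP n)
  have hBv : ∀ᵐ ω ∂μ, B ω ≤ arctan (v ω) := by
    filter_upwards [hfv_ae] with ω h
    exact ciSup_le fun n => arctan_strictMono.monotone (h n)
  have hcB : c ≤ ∫ ω, B ω ∂μ := by
    refine le_of_tendsto hIg_tendsto (Filter.Eventually.of_forall fun n => ?_)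
    exact integral_mono (haint _ (hgP n)) hBint fun ω => haB n ω
  have hkey : ∀ i, P i → a i ≤ᵐ[μ] B := by
    intro i hi
    have hdir' : ∀ n : ℕ, ∃ k, P k ∧ f i ≤ᵐ[μ] f k ∧ f (g n).1 ≤ᵐ[μ] f k := fun n =>
      hdir i (g n).1 hi (hgP n)
    choose k hkP hk1 hk2 using hdir'
    have hmax_meas : Measurable[m0] fun ω => max (a i ω) (B ω) :=
      (hameas i hi).max hBmeas
    have hmax_int : Integrable (fun ω => max (a i ω) (B ω)) μ :=
      (integrable_const (π / 2)).mono' hmax_meas.aestronglyMeasurable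
        (ae_of_all _ fun ω => by
          rw [Real.norm_eq_abs, abs_le]
          constructor
          · exact le_max_of_le_left (neg_le_of_abs_le (habs i ω))
          · exact max_le ((le_abs_self _).trans (habs i ω)) (hBle ω))
    have hstep : ∀ n : ℕ, ∫ ω, max (a i ω) (a (g n).1 ω) ∂μ ≤ c := by
      intro n
      have hmaxle : (fun ω => max (a i ω) (a (g n).1 ω)) ≤ᵐ[μ] a (k n) := by
        filter_upwards [hamono (hk1 n), hamono (hk2 n)] with ω h1 h2
        exact max_le h1 h2
      have hint_max : Integrable (fun ω => max (a i ω) (a (g n).1 ω)) μ :=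
        (integrable_const (π / 2)).mono'
          (((hameas i hi).max (hameas _ (hgP n))).aestronglyMeasurable)
          (ae_of_all _ fun ω => by
            rw [Real.norm_eq_abs, abs_le]
            exact ⟨le_max_of_le_left (neg_le_of_abs_le (habs i ω)),
              max_le ((le_abs_self _).trans (habs i ω)) ((le_abs_self _).trans (habs _ ω))⟩)
      exact le_trans (integral_mono_ae hint_max (haint _ (hkP n)) hmaxle) (hle_c _ (hkP n))
    have hlim : Tendsto (fun n => ∫ ω, max (a i ω) (a (g n).1 ω) ∂μ) atTop
        (nhds (∫ ω, max (a i ω) (B ω) ∂μ)) := by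
      refine tendsto_integral_of_dominated_convergence (fun _ => π / 2)
        (fun n => (((hameas i hi).max (hameas _ (hgP n))).aestronglyMeasurable))
        (integrable_const _) (fun n => ae_of_all _ fun ω => ?_) ?_
      · rw [Real.norm_eq_abs, abs_le]
        exact ⟨le_max_of_le_left (neg_le_of_abs_le (habs i ω)),
          max_le ((le_abs_self _).trans (habs i ω)) ((le_abs_self _).trans (habs _ ω))⟩
      · filter_upwards [htendB] with ω hω
        exact tendsto_const_nhds.max hω
    have hIle : ∫ ω, max (a i ω) (B ω) ∂μ ≤ c :=
      le_of_tendsto hlim (Filter.Eventually.of_forall hstep)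
    have hBmax : ∀ ω, B ω ≤ max (a i ω) (B ω) := fun ω => le_max_right _ _
    have hIeq : ∫ ω, (max (a i ω) (B ω) - B ω) ∂μ = 0 := by
      have h1 : ∫ ω, B ω ∂μ ≤ ∫ ω, max (a i ω) (B ω) ∂μ :=
        integral_mono hBint hmax_int hBmax
      rw [integral_sub hmax_int hBint]
      linarith [hcB, hIle]
    have h0 : (fun ω => max (a i ω) (B ω) - B ω) =ᵐ[μ] 0 :=
      (integral_eq_zero_iff_of_nonneg_ae
        (ae_of_all _ fun ω => sub_nonneg.2 (hBmax ω)) (hmax_int.sub hBint)).1 hIeq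
    filter_upwards [h0] with ω h
    have h' : max (a i ω) (B ω) - B ω = 0 := h
    have : max (a i ω) (B ω) = B ω := by linarith
    exact (max_le_iff.1 this.le).1
  have hL : ∀ i, P i → f i ≤ᵐ[μ] fun ω => tan (B ω) := by
    intro i hi
    filter_upwards [hkey i hi, hBv] with ω h1 h2
    have hBIoo : B ω ∈ Set.Ioo (-(π / 2)) (π / 2) :=
      ⟨hBgt ω, lt_of_le_of_lt h2 (arctan_lt_pi_div_two _)⟩
    have harc : arctan (f i ω) ∈ Set.Ioo (-(π / 2)) (π / 2) :=
      ⟨neg_pi_div_two_lt_arctan _, arctan_lt_pi_div_two _⟩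
    calc f i ω = tan (arctan (f i ω)) := (tan_arctan _).symm
      _ ≤ tan (B ω) := strictMonoOn_tan.monotoneOn harc hBIoo h1
  have hvL : v ≤ᵐ[μ] fun ω => tan (B ω) := hv.2 _ hL
  have htendf : ∀ᵐ ω ∂μ, Tendsto (fun n => f (g n).1 ω) atTop (nhds (tan (B ω))) := by
    filter_upwards [htendB, hBv] with ω h1 h2
    have hBIoo : B ω ∈ Set.Ioo (-(π / 2)) (π / 2) :=
      ⟨hBgt ω, lt_of_le_of_lt h2 (arctan_lt_pi_div_two _)⟩
    have hcos : Real.cos (B ω) ≠ 0 :=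
      (Real.cos_pos_of_mem_Ioo hBIoo).ne'
    have hcont : ContinuousAt tan (B ω) := Real.continuousAt_tan.2 hcos
    have := (hcont.tendsto.comp h1)
    simpa only [Function.comp_def, ha, tan_arctan] using this
  have hLv : (fun ω => tan (B ω)) ≤ᵐ[μ] v := by
    filter_upwards [htendf, hfv_ae] with ω h1 h2
    exact le_of_tendsto h1 (Filter.Eventually.of_forall h2)
  refine ⟨fun n => (g n).1, hgP, ?_⟩
  filter_upwards [hgmono_ae, htendf, hvL, hLv] with ω h1 h2 h3 h4
  refine ⟨h1, ?_⟩
  have : tan (B ω) = v ω := le_antisymm h4 h3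
  rwa [this] at h2

lemma memT0_max {m0 : MeasurableSpace Ω} {𝓕 : Filtration ℝ m0} {T : ℝ} {τ σ : Ω → ℝ}
    (hτ : MemT0 𝓕 T τ) (hσ : MemT0 𝓕 T σ) : MemT0 𝓕 T fun ω => max (τ ω) (σ ω) :=
  ⟨hτ.1.max hσ.1, fun ω => ⟨le_max_of_le_left (hτ.2 ω).1, max_le (hτ.2 ω).2 (hσ.2 ω).2⟩⟩

lemma memT0_min {m0 : MeasurableSpace Ω} {𝓕 : Filtration ℝ m0} {T : ℝ} {τ σ : Ω → ℝ}
    (hτ : MemT0 𝓕 T τ) (hσ : MemT0 𝓕 T σ) : MemT0 𝓕 T fun ω => min (τ ω) (σ ω) :=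
  ⟨hτ.1.min hσ.1, fun ω => ⟨le_min (hτ.2 ω).1 (hσ.2 ω).1, min_le_of_left_le (hτ.2 ω).2⟩⟩

open scoped Classical in
lemma memT0_piecewise {m0 : MeasurableSpace Ω} {𝓕 : Filtration ℝ m0} {T : ℝ}
    {τ σ : Ω → ℝ} (hτ : MemT0 𝓕 T τ) (hσ : MemT0 𝓕 T σ) {A : Set Ω}
    (hst : IsStoppingTime 𝓕 (fun ω => (A.piecewise τ σ ω : WithTop ℝ))) : MemT0 𝓕 T (A.piecewise τ σ) := by
  refine ⟨hst, fun ω => ?_⟩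
  by_cases hω : ω ∈ A
  · simpa [Set.piecewise, hω] using hτ.2 ω
  · simpa [Set.piecewise, hω] using hσ.2 ω

end ReductionHelpers

open scoped Classical in
/-- Extraction of a monotone maximizing sequence for a one-stopping-time value family. -/
lemma key_seq {m0 : MeasurableSpace Ω} {μ : Measure Ω} [IsProbabilityMeasure μ]
    {𝓕 : Filtration ℝ m0} {T : ℝ} {θ : Ω → ℝ} (hθ : MemT0 𝓕 T θ)
    (ψ' : (Ω → ℝ) → Ω → ℝ)
    (hcong : ∀ τ τ', MemT0 𝓕 T τ → MemT0 𝓕 T τ' →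
      ∀ᵐ ω ∂μ, τ ω = τ' ω → ψ' τ ω = ψ' τ' ω)
    (hint : ∀ τ, MemT0 𝓕 T τ → Integrable (ψ' τ) μ)
    {u : Ω → ℝ}
    (hu : IsEssSupFam μ (fun τ => MemT0 𝓕 T τ ∧ θ ≤ᵐ[μ] τ)
      (fun τ => μ[ψ' τ | hθ.1.measurableSpace]) u) :
    ∃ τn : ℕ → Ω → ℝ, (∀ n, MemT0 𝓕 T (τn n) ∧ ∀ ω, θ ω ≤ τn n ω) ∧
      ∀ᵐ ω ∂μ,
        (∀ n, (μ[ψ' (τn n)|hθ.1.measurableSpace]) ω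
            ≤ (μ[ψ' (τn (n + 1))|hθ.1.measurableSpace]) ω) ∧
        Tendsto (fun n => (μ[ψ' (τn n)|hθ.1.measurableSpace]) ω) atTop (nhds (u ω)) := by
  set m : MeasurableSpace Ω := hθ.1.measurableSpace with hmdef
  have hm : m ≤ m0 := hθ.1.measurableSpace_le
  haveI : SigmaFinite (μ.trim hm) := (isFiniteMeasure_trim hm).toSigmaFinite
  set P : (Ω → ℝ) → Prop := fun τ => MemT0 𝓕 T τ ∧ ∀ ω, θ ω ≤ τ ω with hP
  set f : (Ω → ℝ) → Ω → ℝ := fun τ => μ[ψ' τ|m] with hf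
  have hne : ∃ τ, P τ := ⟨θ, hθ, fun ω => le_rfl⟩
  have hmeas : ∀ τ, P τ → Measurable[m0] (f τ) := fun τ _ =>
    (stronglyMeasurable_condExp.mono hm).measurable
  have hdir : ∀ τ σ, P τ → P σ → ∃ k, P k ∧ f τ ≤ᵐ[μ] f k ∧ f σ ≤ᵐ[μ] f k := by
    intro τ σ hτ hσ
    set A : Set Ω := {ω | f τ ω ≤ f σ ω} with hA'
    have hA : MeasurableSet[m] A := by
      have m1 : Measurable[m] (f τ) := stronglyMeasurable_condExp.measurable
      have m2 : Measurable[m] (f σ) := stronglyMeasurable_condExp.measurable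
      exact measurableSet_le m1 m2
    set k : Ω → ℝ := A.piecewise σ τ with hk'
    have hkst : IsStoppingTime 𝓕 (fun ω => (k ω : WithTop ℝ)) :=
      isStoppingTime_piecewise hθ.1 hσ.1.1 hτ.1.1 hσ.2 hτ.2 hA
    have hkm : MemT0 𝓕 T k := memT0_piecewise hσ.1 hτ.1 hkst
    have hkθ : ∀ ω, θ ω ≤ k ω := by
      intro ω
      by_cases hω : ω ∈ A
      · simpa [hk', Set.piecewise, hω] using hσ.2 ω
      · simpa [hk', Set.piecewise, hω] using hτ.2 ω
    have hcσ : ∀ᵐ ω ∂μ, ω ∈ A → f k ω = f σ ω := by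
      refine condexp_eqOn_of_eqOn hm (hint k hkm) (hint σ hσ.1) hA ?_
      filter_upwards [hcong k σ hkm hσ.1] with ω h hω
      exact h (by simp [hk', Set.piecewise, hω])
    have hcτ : ∀ᵐ ω ∂μ, ω ∈ Aᶜ → f k ω = f τ ω := by
      refine condexp_eqOn_of_eqOn hm (hint k hkm) (hint τ hτ.1) hA.compl ?_
      filter_upwards [hcong k τ hkm hτ.1] with ω h hω
      have hω' : ω ∉ A := hω
      exact h (by simp [hk', Set.piecewise, hω'])
    refine ⟨k, ⟨hkm, hkθ⟩, ?_, ?_⟩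
    · filter_upwards [hcσ, hcτ] with ω h1 h2
      by_cases hω : ω ∈ A
      · exact le_of_le_of_eq hω (h1 hω).symm
      · exact (h2 hω).ge
    · filter_upwards [hcσ, hcτ] with ω h1 h2
      by_cases hω : ω ∈ A
      · exact (h1 hω).ge
      · exact le_of_le_of_eq (le_of_not_ge hω) (h2 hω).symm
  have hv : IsEssSupFam μ P f u := by
    constructor
    · exact fun τ hτ => hu.1 τ ⟨hτ.1, ae_of_all _ hτ.2⟩
    · intro w hw
      refine hu.2 w ?_
      rintro τ ⟨hτ, hle⟩
      set τ' : Ω → ℝ := fun ω => max (θ ω) (τ ω) with hτ'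
      have hτ'P : P τ' := ⟨memT0_max hθ hτ, fun ω => le_max_left _ _⟩
      have heq : ψ' τ =ᵐ[μ] ψ' τ' := by
        filter_upwards [hcong τ τ' hτ hτ'P.1, hle] with ω h h2
        exact h (by simp [hτ', max_eq_right h2])
      exact (condExp_congr_ae heq).le.trans (hw τ' hτ'P)
  obtain ⟨g, hgP, hg⟩ := exists_seq_tendsto_isEssSupFam hne hmeas hdir hv
  exact ⟨g, fun n => (hgP n), hg⟩

/-- (Reduction theorem) For a biadmissible family `ψ` of
nonnegative integrable random variables, with `u₁, u₂` the one-stopping value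
families and `φ(θ) = max(u₁(θ), u₂(θ))`, the double-stopping value function
`v(S) = ess sup_{τ₁,τ₂ ∈ T_S} E[ψ(τ₁,τ₂) | F_S]` coincides a.s. with the
single-stopping value function `u(S) = ess sup_{θ ∈ T_S} E[φ(θ) | F_S]`. -/
theorem reduction_theorem
    {m0 : MeasurableSpace Ω} (μ : Measure Ω) [IsProbabilityMeasure μ]
    (𝓕 : Filtration ℝ m0) (T : ℝ) (hT : 0 ≤ T)
    (hFright : ∀ t : ℝ, 𝓕 t = ⨅ s ∈ Set.Ioi t, 𝓕 s)
    (hFnull : ∀ A : Set Ω, μ A = 0 → MeasurableSet[𝓕 0] A)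
    (ψ : (Ω → ℝ) → (Ω → ℝ) → Ω → ℝ)
    (hψ : Biadmissible 𝓕 T μ ψ)
    (hψint : ∀ τ₁ τ₂, MemT0 𝓕 T τ₁ → MemT0 𝓕 T τ₂ → Integrable (ψ τ₁ τ₂) μ)
    (u₁ u₂ : (Ω → ℝ) → Ω → ℝ)
    (hu₁ : ∀ θ (hθ : MemT0 𝓕 T θ),
      IsEssSupFam μ (fun τ => MemT0 𝓕 T τ ∧ θ ≤ᵐ[μ] τ)
        (fun τ => μ[ψ τ θ | hθ.1.measurableSpace]) (u₁ θ))
    (hu₂ : ∀ θ (hθ : MemT0 𝓕 T θ),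
      IsEssSupFam μ (fun τ => MemT0 𝓕 T τ ∧ θ ≤ᵐ[μ] τ)
        (fun τ => μ[ψ θ τ | hθ.1.measurableSpace]) (u₂ θ))
    (hu₁int : ∀ θ, MemT0 𝓕 T θ → Integrable (u₁ θ) μ)
    (hu₂int : ∀ θ, MemT0 𝓕 T θ → Integrable (u₂ θ) μ) :
    ∀ S (hS : MemT0 𝓕 T S), ∀ vS uS : Ω → ℝ,
      IsEssSupFam μ
        (fun p : (Ω → ℝ) × (Ω → ℝ) =>
          MemT0 𝓕 T p.1 ∧ MemT0 𝓕 T p.2 ∧ S ≤ᵐ[μ] p.1 ∧ S ≤ᵐ[μ] p.2)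
        (fun p => μ[ψ p.1 p.2 | hS.1.measurableSpace]) vS →
      IsEssSupFam μ (fun θ => MemT0 𝓕 T θ ∧ S ≤ᵐ[μ] θ)
        (fun θ => μ[fun ω => max (u₁ θ ω) (u₂ θ ω) | hS.1.measurableSpace]) uS →
      vS =ᵐ[μ] uS := by
  intro S hS vS uS hvS huS
  have hmS : hS.1.measurableSpace ≤ m0 := hS.1.measurableSpace_le
  haveI : SigmaFinite (μ.trim hmS) := (isFiniteMeasure_trim hmS).toSigmaFinite
  have hφint : ∀ θ, MemT0 𝓕 T θ → Integrable (fun ω => max (u₁ θ ω) (u₂ θ ω)) μ := by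
    intro θ hθ
    have := (hu₁int θ hθ).sup (hu₂int θ hθ)
    refine this.congr (ae_of_all _ fun ω => ?_)
    simp [Pi.sup_apply]
  -- Direction 1 : `vS ≤ᵐ[μ] uS`
  have hdir1 : vS ≤ᵐ[μ] uS := by
    refine hvS.2 uS ?_
    rintro ⟨τ₁, τ₂⟩ ⟨hτ₁, hτ₂, hSτ₁, hSτ₂⟩
    set τ₁' : Ω → ℝ := fun ω => max (S ω) (τ₁ ω) with hτ₁'def
    set τ₂' : Ω → ℝ := fun ω => max (S ω) (τ₂ ω) with hτ₂'def
    have hτ₁'m : MemT0 𝓕 T τ₁' := memT0_max hS hτ₁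
    have hτ₂'m : MemT0 𝓕 T τ₂' := memT0_max hS hτ₂
    have heq1 : ψ τ₁ τ₂ =ᵐ[μ] ψ τ₁' τ₂' := by
      filter_upwards [hψ.2 τ₁ τ₁' τ₂ τ₂' hτ₁ hτ₁'m hτ₂ hτ₂'m, hSτ₁, hSτ₂] with ω h h1 h2
      exact h (by simp [hτ₁'def, max_eq_right h1]) (by simp [hτ₂'def, max_eq_right h2])
    set θ : Ω → ℝ := fun ω => min (τ₁' ω) (τ₂' ω) with hθdef
    have hθ : MemT0 𝓕 T θ := memT0_min hτ₁'m hτ₂'m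
    have hmθ : hθ.1.measurableSpace ≤ m0 := hθ.1.measurableSpace_le
    haveI : SigmaFinite (μ.trim hmθ) := (isFiniteMeasure_trim hmθ).toSigmaFinite
    have hSθ : ∀ ω, S ω ≤ θ ω := fun ω => le_min (le_max_left _ _) (le_max_left _ _)
    have hmSθ : hS.1.measurableSpace ≤ hθ.1.measurableSpace :=
      hS.1.measurableSpace_mono hθ.1 (fun ω => WithTop.coe_le_coe.2 (hSθ ω))
    have hθτ₁' : ∀ ω, θ ω ≤ τ₁' ω := fun ω => min_le_left _ _
    have hθτ₂' : ∀ ω, θ ω ≤ τ₂' ω := fun ω => min_le_right _ _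
    -- the conditional expectation given `F_θ` is dominated by `max (u₁ θ) (u₂ θ)`
    have hclaim : μ[ψ τ₁' τ₂'|hθ.1.measurableSpace]
        ≤ᵐ[μ] fun ω => max (u₁ θ ω) (u₂ θ ω) := by
      have hC₁ : MeasurableSet[hθ.1.measurableSpace] {ω | τ₂' ω ≤ τ₁' ω} := by
        refine (IsStoppingTime.measurableSet_min_iff hτ₁'m.1 hτ₂'m.1 _).2 ⟨?_, ?_⟩
        · simpa only [WithTop.coe_le_coe] using IsStoppingTime.measurableSet_stopping_time_le hτ₂'m.1 hτ₁'m.1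
        · simpa only [WithTop.coe_le_coe] using IsStoppingTime.measurableSet_le_stopping_time hτ₂'m.1 hτ₁'m.1
      have hC₂ : MeasurableSet[hθ.1.measurableSpace] {ω | τ₁' ω ≤ τ₂' ω} := by
        refine (IsStoppingTime.measurableSet_min_iff hτ₁'m.1 hτ₂'m.1 _).2 ⟨?_, ?_⟩
        · simpa only [WithTop.coe_le_coe] using IsStoppingTime.measurableSet_le_stopping_time hτ₁'m.1 hτ₂'m.1
        · simpa only [WithTop.coe_le_coe] using IsStoppingTime.measurableSet_stopping_time_le hτ₁'m.1 hτ₂'m.1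
      have hc₁ : ∀ᵐ ω ∂μ, ω ∈ {ω | τ₂' ω ≤ τ₁' ω} →
          (μ[ψ τ₁' τ₂'|hθ.1.measurableSpace]) ω = (μ[ψ τ₁' θ|hθ.1.measurableSpace]) ω := by
        refine condexp_eqOn_of_eqOn hmθ (hψint _ _ hτ₁'m hτ₂'m) (hψint _ _ hτ₁'m hθ) hC₁ ?_
        filter_upwards [hψ.2 τ₁' τ₁' τ₂' θ hτ₁'m hτ₁'m hτ₂'m hθ] with ω h hω
        exact h rfl (min_eq_right hω).symm
      have hc₂ : ∀ᵐ ω ∂μ, ω ∈ {ω | τ₁' ω ≤ τ₂' ω} →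
          (μ[ψ τ₁' τ₂'|hθ.1.measurableSpace]) ω = (μ[ψ θ τ₂'|hθ.1.measurableSpace]) ω := by
        refine condexp_eqOn_of_eqOn hmθ (hψint _ _ hτ₁'m hτ₂'m) (hψint _ _ hθ hτ₂'m) hC₂ ?_
        filter_upwards [hψ.2 τ₁' θ τ₂' τ₂' hτ₁'m hθ hτ₂'m hτ₂'m] with ω h hω
        exact h (min_eq_left hω).symm rfl
      have hb₁ : μ[ψ τ₁' θ|hθ.1.measurableSpace] ≤ᵐ[μ] u₁ θ :=
        (hu₁ θ hθ).1 τ₁' ⟨hτ₁'m, ae_of_all _ hθτ₁'⟩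
      have hb₂ : μ[ψ θ τ₂'|hθ.1.measurableSpace] ≤ᵐ[μ] u₂ θ :=
        (hu₂ θ hθ).1 τ₂' ⟨hτ₂'m, ae_of_all _ hθτ₂'⟩
      filter_upwards [hc₁, hc₂, hb₁, hb₂] with ω h1 h2 g1 g2
      rcases le_total (τ₂' ω) (τ₁' ω) with h | h
      · rw [h1 h]; exact le_max_of_le_left g1
      · rw [h2 h]; exact le_max_of_le_right g2
    have h1 : μ[ψ τ₁ τ₂|hS.1.measurableSpace] =ᵐ[μ] μ[ψ τ₁' τ₂'|hS.1.measurableSpace] :=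
      condExp_congr_ae heq1
    have h2 : μ[ψ τ₁' τ₂'|hS.1.measurableSpace]
        =ᵐ[μ] μ[μ[ψ τ₁' τ₂'|hθ.1.measurableSpace]|hS.1.measurableSpace] :=
      (condExp_condExp_of_le hmSθ hmθ).symm
    have h3 : μ[μ[ψ τ₁' τ₂'|hθ.1.measurableSpace]|hS.1.measurableSpace]
        ≤ᵐ[μ] μ[fun ω => max (u₁ θ ω) (u₂ θ ω)|hS.1.measurableSpace] :=
      condExp_mono integrable_condExp (hφint θ hθ) hclaim
    have h4 : μ[fun ω => max (u₁ θ ω) (u₂ θ ω)|hS.1.measurableSpace] ≤ᵐ[μ] uS :=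
      huS.1 θ ⟨hθ, ae_of_all _ hSθ⟩
    filter_upwards [h1, h2, h3, h4] with ω e1 e2 e3 e4
    calc (μ[ψ τ₁ τ₂|hS.1.measurableSpace]) ω = _ := e1
      _ = _ := e2
      _ ≤ _ := e3
      _ ≤ uS ω := e4
  -- Direction 2 : `uS ≤ᵐ[μ] vS`
  have hdir2 : uS ≤ᵐ[μ] vS := by
    refine huS.2 vS ?_
    rintro θ₀ ⟨hθ₀, hSθ₀⟩
    set θ : Ω → ℝ := fun ω => max (S ω) (θ₀ ω) with hθdef
    have hθ : MemT0 𝓕 T θ := memT0_max hS hθ₀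
    have hθeq : θ₀ =ᵐ[μ] θ := by
      filter_upwards [hSθ₀] with ω h
      simp [hθdef, max_eq_right h]
    have hmθ : hθ.1.measurableSpace ≤ m0 := hθ.1.measurableSpace_le
    haveI : SigmaFinite (μ.trim hmθ) := (isFiniteMeasure_trim hmθ).toSigmaFinite
    have hSθ : ∀ ω, S ω ≤ θ ω := fun ω => le_max_left _ _
    have hmSθ : hS.1.measurableSpace ≤ hθ.1.measurableSpace :=
      hS.1.measurableSpace_mono hθ.1 (fun ω => WithTop.coe_le_coe.2 (hSθ ω))
    -- the σ-algebras of `θ₀` and `θ` coincide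
    have e : hθ₀.1.measurableSpace = hθ.1.measurableSpace :=
      le_antisymm
        (stoppingTime_measurableSpace_le_of_ae_eq hFnull hθ₀.1 hθ.1
          (fun ω => (hθ.2 ω).1) hθeq)
        (stoppingTime_measurableSpace_le_of_ae_eq hFnull hθ.1 hθ₀.1
          (fun ω => (hθ₀.2 ω).1) hθeq.symm)
    -- `u₁ θ₀ = u₁ θ` and `u₂ θ₀ = u₂ θ` a.e.
    have hfeq₁ : ∀ τ, MemT0 𝓕 T τ →
        μ[ψ τ θ₀|hθ₀.1.measurableSpace] =ᵐ[μ] μ[ψ τ θ|hθ.1.measurableSpace] := by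
      intro τ hτ
      rw [e]
      refine condExp_congr_ae ?_
      filter_upwards [hψ.2 τ τ θ₀ θ hτ hτ hθ₀ hθ, hθeq] with ω h h2
      exact h rfl h2
    have hfeq₂ : ∀ τ, MemT0 𝓕 T τ →
        μ[ψ θ₀ τ|hθ₀.1.measurableSpace] =ᵐ[μ] μ[ψ θ τ|hθ.1.measurableSpace] := by
      intro τ hτ
      rw [e]
      refine condExp_congr_ae ?_
      filter_upwards [hψ.2 θ₀ θ τ τ hθ₀ hθ hτ hτ, hθeq] with ω h h2
      exact h h2 rfl
    have hPiff : ∀ τ : Ω → ℝ, (θ₀ ≤ᵐ[μ] τ) ↔ (θ ≤ᵐ[μ] τ) := by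
      intro τ
      constructor <;> intro h
      · filter_upwards [h, hθeq] with ω h1 h2; rw [← h2]; exact h1
      · filter_upwards [h, hθeq] with ω h1 h2; rw [h2]; exact h1
    have h1eq : u₁ θ₀ =ᵐ[μ] u₁ θ := by
      refine Filter.EventuallyLE.antisymm ?_ ?_
      · refine (hu₁ θ₀ hθ₀).2 (u₁ θ) ?_
        rintro τ ⟨hτ, hle⟩
        exact (hfeq₁ τ hτ).le.trans ((hu₁ θ hθ).1 τ ⟨hτ, (hPiff τ).1 hle⟩)
      · refine (hu₁ θ hθ).2 (u₁ θ₀) ?_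
        rintro τ ⟨hτ, hle⟩
        exact (hfeq₁ τ hτ).symm.le.trans ((hu₁ θ₀ hθ₀).1 τ ⟨hτ, (hPiff τ).2 hle⟩)
    have h2eq : u₂ θ₀ =ᵐ[μ] u₂ θ := by
      refine Filter.EventuallyLE.antisymm ?_ ?_
      · refine (hu₂ θ₀ hθ₀).2 (u₂ θ) ?_
        rintro τ ⟨hτ, hle⟩
        exact (hfeq₂ τ hτ).le.trans ((hu₂ θ hθ).1 τ ⟨hτ, (hPiff τ).1 hle⟩)
      · refine (hu₂ θ hθ).2 (u₂ θ₀) ?_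
        rintro τ ⟨hτ, hle⟩
        exact (hfeq₂ τ hτ).symm.le.trans ((hu₂ θ₀ hθ₀).1 τ ⟨hτ, (hPiff τ).2 hle⟩)
    have hgoal_eq : μ[fun ω => max (u₁ θ₀ ω) (u₂ θ₀ ω)|hS.1.measurableSpace]
        =ᵐ[μ] μ[fun ω => max (u₁ θ ω) (u₂ θ ω)|hS.1.measurableSpace] := by
      refine condExp_congr_ae ?_
      filter_upwards [h1eq, h2eq] with ω g1 g2
      rw [g1, g2]
    -- maximizing sequences for `u₁ θ` and `u₂ θ`
    obtain ⟨τn, hτn, hτn_ae⟩ := key_seq hθ (fun τ => ψ τ θ)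
      (fun τ τ' hτ hτ' => (hψ.2 τ τ' θ θ hτ hτ' hθ hθ).mono fun ω h hh => h hh rfl)
      (fun τ hτ => hψint τ θ hτ hθ) (hu₁ θ hθ)
    obtain ⟨σn, hσn, hσn_ae⟩ := key_seq hθ (fun τ => ψ θ τ)
      (fun τ τ' hτ hτ' => (hψ.2 θ θ τ τ' hθ hθ hτ hτ').mono fun ω h hh => h rfl hh)
      (fun τ hτ => hψint θ τ hθ hτ) (hu₂ θ hθ)
    -- measurable versions of `u₁ θ`, `u₂ θ`
    have hg₁ : u₁ θ =ᵐ[μ] μ[u₁ θ|hθ.1.measurableSpace] :=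
      isEssSupFam_condexp_self hmθ (hu₁ θ hθ) (hu₁int θ hθ)
        (fun τ _ => Filter.EventuallyEq.of_eq
          (condExp_of_stronglyMeasurable hmθ stronglyMeasurable_condExp integrable_condExp))
        (fun τ _ => integrable_condExp)
    have hg₂ : u₂ θ =ᵐ[μ] μ[u₂ θ|hθ.1.measurableSpace] :=
      isEssSupFam_condexp_self hmθ (hu₂ θ hθ) (hu₂int θ hθ)
        (fun τ _ => Filter.EventuallyEq.of_eq
          (condExp_of_stronglyMeasurable hmθ stronglyMeasurable_condExp integrable_condExp))
        (fun τ _ => integrable_condExp)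
    set A : Set Ω :=
      {ω | (μ[u₂ θ|hθ.1.measurableSpace]) ω ≤ (μ[u₁ θ|hθ.1.measurableSpace]) ω} with hAdef
    have hA : MeasurableSet[hθ.1.measurableSpace] A := by
      have m1 : Measurable[hθ.1.measurableSpace] (μ[u₁ θ|hθ.1.measurableSpace]) :=
        stronglyMeasurable_condExp.measurable
      have m2 : Measurable[hθ.1.measurableSpace] (μ[u₂ θ|hθ.1.measurableSpace]) :=
        stronglyMeasurable_condExp.measurable
      exact measurableSet_le m2 m1
    classical
    set ρ : ℕ → Ω → ℝ := fun n => A.piecewise (τn n) θ with hρdef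
    set ρ' : ℕ → Ω → ℝ := fun n => A.piecewise θ (σn n) with hρ'def
    have hρst : ∀ n, IsStoppingTime 𝓕 (fun ω => (ρ n ω : WithTop ℝ)) := fun n =>
      isStoppingTime_piecewise hθ.1 (hτn n).1.1 hθ.1 (hτn n).2 (fun ω => le_rfl) hA
    have hρ'st : ∀ n, IsStoppingTime 𝓕 (fun ω => (ρ' n ω : WithTop ℝ)) := fun n =>
      isStoppingTime_piecewise hθ.1 hθ.1 (hσn n).1.1 (fun ω => le_rfl) (hσn n).2 hA
    have hρm : ∀ n, MemT0 𝓕 T (ρ n) := fun n => memT0_piecewise (hτn n).1 hθ (hρst n)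
    have hρ'm : ∀ n, MemT0 𝓕 T (ρ' n) := fun n => memT0_piecewise hθ (hσn n).1 (hρ'st n)
    have hθρ : ∀ n ω, θ ω ≤ ρ n ω := by
      intro n ω; by_cases hω : ω ∈ A
      · simpa [hρdef, Set.piecewise, hω] using (hτn n).2 ω
      · simp [hρdef, Set.piecewise, hω]
    have hθρ' : ∀ n ω, θ ω ≤ ρ' n ω := by
      intro n ω; by_cases hω : ω ∈ A
      · simp [hρ'def, Set.piecewise, hω]
      · simpa [hρ'def, Set.piecewise, hω] using (hσn n).2 ω
    -- conditional expectations of the spliced pairs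
    have hcA : ∀ n, ∀ᵐ ω ∂μ, ω ∈ A →
        (μ[ψ (ρ n) (ρ' n)|hθ.1.measurableSpace]) ω
          = (μ[ψ (τn n) θ|hθ.1.measurableSpace]) ω := by
      intro n
      refine condexp_eqOn_of_eqOn hmθ (hψint _ _ (hρm n) (hρ'm n))
        (hψint _ _ (hτn n).1 hθ) hA ?_
      filter_upwards [hψ.2 (ρ n) (τn n) (ρ' n) θ (hρm n) (hτn n).1 (hρ'm n) hθ] with ω h hω
      exact h (by simp [hρdef, Set.piecewise, hω]) (by simp [hρ'def, Set.piecewise, hω])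
    have hcAc : ∀ n, ∀ᵐ ω ∂μ, ω ∈ Aᶜ →
        (μ[ψ (ρ n) (ρ' n)|hθ.1.measurableSpace]) ω
          = (μ[ψ θ (σn n)|hθ.1.measurableSpace]) ω := by
      intro n
      refine condexp_eqOn_of_eqOn hmθ (hψint _ _ (hρm n) (hρ'm n))
        (hψint _ _ hθ (hσn n).1) hA.compl ?_
      filter_upwards [hψ.2 (ρ n) θ (ρ' n) (σn n) (hρm n) hθ (hρ'm n) (hσn n).1] with ω h hω
      have hω' : ω ∉ A := hω
      exact h (by simp [hρdef, Set.piecewise, hω']) (by simp [hρ'def, Set.piecewise, hω'])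
    have hfnle : ∀ n, μ[ψ (τn n) θ|hθ.1.measurableSpace] ≤ᵐ[μ] u₁ θ := fun n =>
      (hu₁ θ hθ).1 (τn n) ⟨(hτn n).1, ae_of_all _ (hτn n).2⟩
    have hgnle : ∀ n, μ[ψ θ (σn n)|hθ.1.measurableSpace] ≤ᵐ[μ] u₂ θ := fun n =>
      (hu₂ θ hθ).1 (σn n) ⟨(hσn n).1, ae_of_all _ (hσn n).2⟩
    have hn_nonneg : ∀ n, (0 : Ω → ℝ) ≤ᵐ[μ] μ[ψ (ρ n) (ρ' n)|hθ.1.measurableSpace] := fun n =>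
      condExp_nonneg (ae_of_all _ fun ω => (hψ.1 _ _ (hρm n) (hρ'm n)).2 ω)
    -- a.e. convergence of the spliced conditional expectations to `max (u₁ θ) (u₂ θ)`
    have htend : ∀ᵐ ω ∂μ,
        Tendsto (fun n => (μ[ψ (ρ n) (ρ' n)|hθ.1.measurableSpace]) ω) atTop
          (nhds (max (u₁ θ ω) (u₂ θ ω))) := by
      filter_upwards [hτn_ae, hσn_ae, ae_all_iff.2 hcA, ae_all_iff.2 hcAc, hg₁, hg₂]
        with ω hu1t hu2t hA_eq hAc_eq hgg₁ hgg₂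
      by_cases hω : ω ∈ A
      · have hmax : max (u₁ θ ω) (u₂ θ ω) = u₁ θ ω := by
          have : u₂ θ ω ≤ u₁ θ ω := by rw [hgg₁, hgg₂]; exact hω
          exact max_eq_left this
        rw [hmax]
        exact hu1t.2.congr fun n => (hA_eq n hω).symm
      · have hω' : ω ∈ Aᶜ := hω
        have hle : u₁ θ ω ≤ u₂ θ ω := by
          rw [hgg₁, hgg₂]
          exact le_of_not_ge hω
        rw [max_eq_right hle]
        exact hu2t.2.congr fun n => (hAc_eq n hω').symm
    have hnleφ : ∀ n, μ[ψ (ρ n) (ρ' n)|hθ.1.measurableSpace]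
        ≤ᵐ[μ] fun ω => max (u₁ θ ω) (u₂ θ ω) := by
      intro n
      filter_upwards [hcA n, hcAc n, hfnle n, hgnle n] with ω h1 h2 l1 l2
      by_cases hω : ω ∈ A
      · rw [h1 hω]; exact le_max_of_le_left l1
      · have hω' : ω ∈ Aᶜ := hω
        rw [h2 hω']; exact le_max_of_le_right l2
    -- pass to conditional expectations given `F_S` and use `L¹` convergence
    set φ : Ω → ℝ := fun ω => max (u₁ θ ω) (u₂ θ ω) with hφdef
    have hφi : Integrable φ μ := hφint θ hθ
    set D : Ω → ℝ := μ[φ|hS.1.measurableSpace] with hDdef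
    set Dn : ℕ → Ω → ℝ := fun n => μ[μ[ψ (ρ n) (ρ' n)|hθ.1.measurableSpace]|hS.1.measurableSpace]
      with hDndef
    have hDn_eq : ∀ n, Dn n =ᵐ[μ] μ[ψ (ρ n) (ρ' n)|hS.1.measurableSpace] := fun n =>
      condExp_condExp_of_le hmSθ hmθ
    have hDnle : ∀ n, Dn n ≤ᵐ[μ] vS := by
      intro n
      refine (hDn_eq n).le.trans ?_
      exact hvS.1 (ρ n, ρ' n) ⟨hρm n, hρ'm n,
        ae_of_all _ fun ω => (hSθ ω).trans (hθρ n ω),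
        ae_of_all _ fun ω => (hSθ ω).trans (hθρ' n ω)⟩
    have hIL1 : Tendsto
        (fun n => ∫ ω, |(μ[ψ (ρ n) (ρ' n)|hθ.1.measurableSpace]) ω - φ ω| ∂μ) atTop
        (nhds 0) := by
      have hmeasn : ∀ n : ℕ, AEStronglyMeasurable
          (fun ω => |(μ[ψ (ρ n) (ρ' n)|hθ.1.measurableSpace]) ω - φ ω|) μ := fun n => by
        simpa [Real.norm_eq_abs] using (integrable_condExp.sub hφi).aestronglyMeasurable.norm
      have hbound : ∀ n : ℕ, ∀ᵐ ω ∂μ,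
          ‖|(μ[ψ (ρ n) (ρ' n)|hθ.1.measurableSpace]) ω - φ ω|‖ ≤ |φ ω| := by
        intro n
        filter_upwards [hn_nonneg n, hnleφ n] with ω l1 l2
        have h1 : (0:ℝ) ≤ (μ[ψ (ρ n) (ρ' n)|hθ.1.measurableSpace]) ω := l1
        have h2 : (μ[ψ (ρ n) (ρ' n)|hθ.1.measurableSpace]) ω ≤ φ ω := l2
        rw [Real.norm_eq_abs, abs_abs, abs_sub_comm, abs_of_nonneg (by linarith)]
        rw [abs_of_nonneg (by linarith)]
        linarith
      have hlim' : ∀ᵐ ω ∂μ, Tendsto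
          (fun n => |(μ[ψ (ρ n) (ρ' n)|hθ.1.measurableSpace]) ω - φ ω|) atTop (nhds 0) := by
        filter_upwards [htend] with ω h
        have := (h.sub (tendsto_const_nhds (x := φ ω))).abs
        simpa [hφdef] using this
      have h := tendsto_integral_of_dominated_convergence (μ := μ)
        (f := fun _ => (0 : ℝ)) (fun ω => |φ ω|) hmeasn hφi.abs hbound hlim'
      simpa using h
    have hIle : ∀ n, ∫ ω, |Dn n ω - D ω| ∂μ
        ≤ ∫ ω, |(μ[ψ (ρ n) (ρ' n)|hθ.1.measurableSpace]) ω - φ ω| ∂μ := by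
      intro n
      have hsub : Dn n - D =ᵐ[μ]
          μ[(fun ω => (μ[ψ (ρ n) (ρ' n)|hθ.1.measurableSpace]) ω - φ ω)|hS.1.measurableSpace] :=
        (condExp_sub integrable_condExp hφi hS.1.measurableSpace).symm
      have habs := integral_abs_condExp_le
        (μ := μ) (m := hS.1.measurableSpace)
        (fun ω => (μ[ψ (ρ n) (ρ' n)|hθ.1.measurableSpace]) ω - φ ω)
      refine le_trans (le_of_eq ?_) habs
      refine integral_congr_ae ?_
      filter_upwards [hsub] with ω h
      have h' : Dn n ω - D ω =
          (μ[(fun ω => (μ[ψ (ρ n) (ρ' n)|hθ.1.measurableSpace]) ω - φ ω)|hS.1.measurableSpace]) ω := h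
      rw [← h']
    have hIn0 : Tendsto (fun n => ∫ ω, |Dn n ω - D ω| ∂μ) atTop (nhds 0) := by
      refine squeeze_zero (fun n => integral_nonneg fun ω => abs_nonneg _) hIle hIL1
    have heLp : Tendsto (fun n => eLpNorm (Dn n - D) 1 μ) atTop (nhds 0) := by
      have heq : ∀ n, eLpNorm (Dn n - D) 1 μ = ENNReal.ofReal (∫ ω, |Dn n ω - D ω| ∂μ) := by
        intro n
        rw [eLpNorm_one_eq_lintegral_enorm,
          ← ofReal_integral_norm_eq_lintegral_enorm (integrable_condExp.sub integrable_condExp)]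
        congr 1
      simp_rw [heq]
      have := (ENNReal.continuous_ofReal.tendsto 0).comp hIn0
      simpa [Function.comp_def] using this
    have hTIM : TendstoInMeasure μ (fun n => Dn n) atTop D :=
      tendstoInMeasure_of_tendsto_eLpNorm one_ne_zero
        (fun n => integrable_condExp.aestronglyMeasurable)
        integrable_condExp.aestronglyMeasurable heLp
    obtain ⟨ns, _, hns⟩ := hTIM.exists_seq_tendsto_ae
    have hDleq : D ≤ᵐ[μ] vS := by
      filter_upwards [hns, ae_all_iff.2 hDnle] with ω htd hle
      exact le_of_tendsto htd (Filter.Eventually.of_forall fun k => hle (ns k))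
    calc μ[fun ω => max (u₁ θ₀ ω) (u₂ θ₀ ω)|hS.1.measurableSpace]
        =ᵐ[μ] D := hgoal_eq
      _ ≤ᵐ[μ] vS := hDleq
  exact hdir1.antisymm hdir2
end

section
/- (Construction of optimal pairs) Let {ψ(θ,S), θ,S ∈ T_0} be a biadmissible family of nonnegative integrable random variables, and define u_1, u_2, φ, u, v as in the reduction theorem. Fix S ∈ T_0. Suppose θ* ∈ T_S is optimal for u(S), i.e. u(S) = E[φ(θ*) | F_S] a.s., and θ*_1, θ*_2 ∈ T_{θ*} satisfy u_1(θ*) = E[ψ(θ*_1, θ*) | F_{θ*}] a.s. and u_2(θ*) = E[ψ(θ*, θ*_2) | F_{θ*}] a.s. Let B = {u_1(θ*) ≤ u_2(θ*)} and define τ*_1 = θ* 1_B + θ*_1 1_{B^c} and τ*_2 = θ*_2 1_B + θ* 1_{B^c}. Then τ*_1, τ*_2 are stopping times in T_S and v(S) = E[ψ(τ*_1, τ*_2) | F_S] a.s., so (τ*_1, τ*_2) is an optimal pair for v(S). -/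
open MeasureTheory Filter Set Topology

variable {Ω : Type*}

section OptAux

variable {m0 : MeasurableSpace Ω} {𝓕 : Filtration ℝ m0} {T : ℝ} {μ : Measure Ω}

/-- Key helper: if `σ ≤ τ` a.e. and null sets belong to `𝓕 0`, then for any
`F_σ`-measurable `A` and any `t`, the set `A ∩ {τ ≤ t}` is `𝓕 t`-measurable. -/
lemma optAux_inter_le
    (hFnull : ∀ A : Set Ω, μ A = 0 → MeasurableSet[𝓕 0] A)
    {σ τ : Ω → ℝ} (hσ : MemT0 𝓕 T σ) (hτ : MemT0 𝓕 T τ) (hle : σ ≤ᵐ[μ] τ)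
    {A : Set Ω} (hA : MeasurableSet[hσ.1.measurableSpace] A) (t : ℝ) :
    MeasurableSet[𝓕 t] (A ∩ {ω | τ ω ≤ t}) := by
  rcases lt_or_ge t 0 with ht | ht
  · have : A ∩ {ω | τ ω ≤ t} = ∅ := by
      ext ω
      simp only [Set.mem_inter_iff, Set.mem_setOf_eq, Set.mem_empty_iff_false, iff_false]
      rintro ⟨-, h⟩
      exact absurd (le_trans (hτ.2 ω).1 h) (not_le.2 ht)
    rw [this]; exact @MeasurableSet.empty _ (𝓕 t)
  · set N := {ω | ¬ σ ω ≤ τ ω} with hNdef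
    have hNμ : μ N = 0 := ae_iff.mp hle
    have hN : MeasurableSet[𝓕 t] N := 𝓕.mono ht _ (hFnull N hNμ)
    have hN2 : MeasurableSet[𝓕 t] (A ∩ {ω | τ ω ≤ t} ∩ N) :=
      𝓕.mono ht _ (hFnull _ (measure_mono_null Set.inter_subset_right hNμ))
    have hAσ : MeasurableSet[𝓕 t] (A ∩ {ω | σ ω ≤ t}) := by simpa using hA.2 t
    have key : A ∩ {ω | τ ω ≤ t} =
        (A ∩ {ω | σ ω ≤ t} ∩ {ω | τ ω ≤ t} ∩ Nᶜ) ∪ (A ∩ {ω | τ ω ≤ t} ∩ N) := by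
      ext ω
      constructor
      · rintro ⟨hA', hτt⟩
        by_cases hω : ω ∈ N
        · exact Or.inr ⟨⟨hA', hτt⟩, hω⟩
        · have hστ : σ ω ≤ τ ω := not_not.mp hω
          exact Or.inl ⟨⟨⟨hA', le_trans hστ hτt⟩, hτt⟩, hω⟩
      · rintro (⟨⟨⟨h1, _⟩, h3⟩, _⟩ | ⟨⟨h1, h2⟩, _⟩) <;> exact ⟨h1, by assumption⟩
    have hτt : MeasurableSet[𝓕 t] {ω | τ ω ≤ t} := by simpa using hτ.1 t
    rw [key]
    exact ((hAσ.inter hτt).inter hN.compl).union hN2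

/-- If `σ ≤ τ` a.e. then `F_σ ≤ F_τ` (using completeness of the filtration). -/
lemma optAux_measurableSpace_mono_ae
    (hFnull : ∀ A : Set Ω, μ A = 0 → MeasurableSet[𝓕 0] A)
    {σ τ : Ω → ℝ} (hσ : MemT0 𝓕 T σ) (hτ : MemT0 𝓕 T τ) (hle : σ ≤ᵐ[μ] τ) :
    hσ.1.measurableSpace ≤ hτ.1.measurableSpace := by
  intro A hA
  rw [hτ.1.measurableSet]
  exact ⟨hA.1, fun t => by simpa using optAux_inter_le hFnull hσ hτ hle hA t⟩

/-- `if p then τ else σ` variant (larger branch on `p`). -/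
lemma optAux_memT0_ite
    (hFnull : ∀ A : Set Ω, μ A = 0 → MeasurableSet[𝓕 0] A)
    {σ τ : Ω → ℝ} (hσ : MemT0 𝓕 T σ) (hτ : MemT0 𝓕 T τ) (hle : σ ≤ᵐ[μ] τ)
    (p : Ω → Prop) [DecidablePred p]
    (hp : MeasurableSet[hσ.1.measurableSpace] {ω | p ω}) :
    MemT0 𝓕 T (fun ω => if p ω then τ ω else σ ω) := by
  refine ⟨fun t => ?_, fun ω => ?_⟩
  · have key : {ω | (if p ω then τ ω else σ ω) ≤ t} =
        ({ω | p ω} ∩ {ω | τ ω ≤ t}) ∪ ({ω | p ω}ᶜ ∩ {ω | σ ω ≤ t}) := by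
      ext ω
      by_cases hω : p ω <;> simp [hω]
    simp only [WithTop.coe_le_coe]
    rw [key]
    exact (optAux_inter_le hFnull hσ hτ hle hp t).union (by simpa using hp.compl.2 t)
  · by_cases hω : p ω
    · simpa [hω] using hτ.2 ω
    · simpa [hω] using hσ.2 ω

/-- `if p then σ else τ` variant (smaller branch on `p`). -/
lemma optAux_memT0_ite'
    (hFnull : ∀ A : Set Ω, μ A = 0 → MeasurableSet[𝓕 0] A)
    {σ τ : Ω → ℝ} (hσ : MemT0 𝓕 T σ) (hτ : MemT0 𝓕 T τ) (hle : σ ≤ᵐ[μ] τ)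
    (p : Ω → Prop) [DecidablePred p]
    (hp : MeasurableSet[hσ.1.measurableSpace] {ω | p ω}) :
    MemT0 𝓕 T (fun ω => if p ω then σ ω else τ ω) := by
  refine ⟨fun t => ?_, fun ω => ?_⟩
  · have key : {ω | (if p ω then σ ω else τ ω) ≤ t} =
        ({ω | p ω} ∩ {ω | σ ω ≤ t}) ∪ ({ω | p ω}ᶜ ∩ {ω | τ ω ≤ t}) := by
      ext ω
      by_cases hω : p ω <;> simp [hω]
    simp only [WithTop.coe_le_coe]
    rw [key]
    exact MeasurableSet.union (by simpa using hp.2 t) (optAux_inter_le hFnull hσ hτ hle hp.compl t)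
  · by_cases hω : p ω
    · simpa [hω] using hσ.2 ω
    · simpa [hω] using hτ.2 ω

end OptAux

/-- (Construction of optimal pairs) If `θ*` is optimal for
`u(S)`, `θ*₁` is optimal for `u₁(θ*)`, `θ*₂` is optimal for `u₂(θ*)`, and
`B = {u₁(θ*) ≤ u₂(θ*)}`, then `τ*₁ = θ* 1_B + θ*₁ 1_{Bᶜ}` and
`τ*₂ = θ*₂ 1_B + θ* 1_{Bᶜ}` are stopping times in `T_S` and
`v(S) = E[ψ(τ*₁, τ*₂) | F_S]` a.s. -/
theorem optimal_pair_construction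
    {m0 : MeasurableSpace Ω} (μ : Measure Ω) [IsProbabilityMeasure μ]
    (𝓕 : Filtration ℝ m0) (T : ℝ) (hT : 0 ≤ T)
    (hFright : ∀ t : ℝ, 𝓕 t = ⨅ s ∈ Set.Ioi t, 𝓕 s)
    (hFnull : ∀ A : Set Ω, μ A = 0 → MeasurableSet[𝓕 0] A)
    (ψ : (Ω → ℝ) → (Ω → ℝ) → Ω → ℝ)
    (hψ : Biadmissible 𝓕 T μ ψ)
    (hψint : ∀ τ₁ τ₂, MemT0 𝓕 T τ₁ → MemT0 𝓕 T τ₂ → Integrable (ψ τ₁ τ₂) μ)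
    (S : Ω → ℝ) (hS : MemT0 𝓕 T S)
    (u₁ u₂ : (Ω → ℝ) → Ω → ℝ)
    (hu₁ : ∀ θ (hθ : MemT0 𝓕 T θ),
      IsEssSupFam μ (fun τ => MemT0 𝓕 T τ ∧ θ ≤ᵐ[μ] τ)
        (fun τ => μ[ψ τ θ | hθ.1.measurableSpace]) (u₁ θ))
    (hu₂ : ∀ θ (hθ : MemT0 𝓕 T θ),
      IsEssSupFam μ (fun τ => MemT0 𝓕 T τ ∧ θ ≤ᵐ[μ] τ)
        (fun τ => μ[ψ θ τ | hθ.1.measurableSpace]) (u₂ θ))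
    (hu₁int : ∀ θ, MemT0 𝓕 T θ → Integrable (u₁ θ) μ)
    (hu₂int : ∀ θ, MemT0 𝓕 T θ → Integrable (u₂ θ) μ)
    (vS uS : Ω → ℝ)
    (hvS : IsEssSupFam μ
      (fun p : (Ω → ℝ) × (Ω → ℝ) =>
        MemT0 𝓕 T p.1 ∧ MemT0 𝓕 T p.2 ∧ S ≤ᵐ[μ] p.1 ∧ S ≤ᵐ[μ] p.2)
      (fun p => μ[ψ p.1 p.2 | hS.1.measurableSpace]) vS)
    (huS : IsEssSupFam μ (fun θ => MemT0 𝓕 T θ ∧ S ≤ᵐ[μ] θ)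
      (fun θ => μ[fun ω => max (u₁ θ ω) (u₂ θ ω) | hS.1.measurableSpace]) uS)
    (θstar : Ω → ℝ) (hθstar : MemT0 𝓕 T θstar) (hθstarS : S ≤ᵐ[μ] θstar)
    (hu₁meas : Measurable[hθstar.1.measurableSpace] (u₁ θstar))
    (hu₂meas : Measurable[hθstar.1.measurableSpace] (u₂ θstar))
    (hopt : uS =ᵐ[μ]
      μ[fun ω => max (u₁ θstar ω) (u₂ θstar ω) | hS.1.measurableSpace])
    (θstar₁ : Ω → ℝ) (hθstar₁ : MemT0 𝓕 T θstar₁) (hθstar₁ge : θstar ≤ᵐ[μ] θstar₁)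
    (hopt₁ : u₁ θstar =ᵐ[μ] μ[ψ θstar₁ θstar | hθstar.1.measurableSpace])
    (θstar₂ : Ω → ℝ) (hθstar₂ : MemT0 𝓕 T θstar₂) (hθstar₂ge : θstar ≤ᵐ[μ] θstar₂)
    (hopt₂ : u₂ θstar =ᵐ[μ] μ[ψ θstar θstar₂ | hθstar.1.measurableSpace]) :
    MemT0 𝓕 T (fun ω => if u₁ θstar ω ≤ u₂ θstar ω then θstar ω else θstar₁ ω) ∧
    S ≤ᵐ[μ] (fun ω => if u₁ θstar ω ≤ u₂ θstar ω then θstar ω else θstar₁ ω) ∧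
    MemT0 𝓕 T (fun ω => if u₁ θstar ω ≤ u₂ θstar ω then θstar₂ ω else θstar ω) ∧
    S ≤ᵐ[μ] (fun ω => if u₁ θstar ω ≤ u₂ θstar ω then θstar₂ ω else θstar ω) ∧
    vS =ᵐ[μ]
      μ[ψ (fun ω => if u₁ θstar ω ≤ u₂ θstar ω then θstar ω else θstar₁ ω)
          (fun ω => if u₁ θstar ω ≤ u₂ θstar ω then θstar₂ ω else θstar ω) |
        hS.1.measurableSpace] := by
  classical
  have hm0S : hS.1.measurableSpace ≤ m0 := hS.1.measurableSpace_le
  have hm0θ : hθstar.1.measurableSpace ≤ m0 := hθstar.1.measurableSpace_le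
  have hmSθ : hS.1.measurableSpace ≤ hθstar.1.measurableSpace :=
    optAux_measurableSpace_mono_ae hFnull hS hθstar hθstarS
  have hB : MeasurableSet[hθstar.1.measurableSpace] {ω | u₁ θstar ω ≤ u₂ θstar ω} :=
    measurableSet_le hu₁meas hu₂meas
  have hBm0 : MeasurableSet {ω | u₁ θstar ω ≤ u₂ θstar ω} := hm0θ _ hB
  set τ1 : Ω → ℝ := fun ω => if u₁ θstar ω ≤ u₂ θstar ω then θstar ω else θstar₁ ω with hτ1def
  set τ2 : Ω → ℝ := fun ω => if u₁ θstar ω ≤ u₂ θstar ω then θstar₂ ω else θstar ω with hτ2def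
  have hτ1 : MemT0 𝓕 T τ1 :=
    optAux_memT0_ite' hFnull hθstar hθstar₁ hθstar₁ge
      (fun ω => u₁ θstar ω ≤ u₂ θstar ω) hB
  have hτ2 : MemT0 𝓕 T τ2 :=
    optAux_memT0_ite hFnull hθstar hθstar₂ hθstar₂ge
      (fun ω => u₁ θstar ω ≤ u₂ θstar ω) hB
  have hτ1ge : θstar ≤ᵐ[μ] τ1 := by
    filter_upwards [hθstar₁ge] with ω h
    rw [hτ1def]
    by_cases hω : u₁ θstar ω ≤ u₂ θstar ω <;> simp [hω, h]
  have hτ2ge : θstar ≤ᵐ[μ] τ2 := by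
    filter_upwards [hθstar₂ge] with ω h
    rw [hτ2def]
    by_cases hω : u₁ θstar ω ≤ u₂ θstar ω <;> simp [hω, h]
  have hSτ1 : S ≤ᵐ[μ] τ1 := hθstarS.trans hτ1ge
  have hSτ2 : S ≤ᵐ[μ] τ2 := hθstarS.trans hτ2ge
  refine ⟨hτ1, hSτ1, hτ2, hSτ2, ?_⟩
  have hint02 : Integrable (ψ θstar θstar₂) μ := hψint _ _ hθstar hθstar₂
  have hint10 : Integrable (ψ θstar₁ θstar) μ := hψint _ _ hθstar₁ hθstar
  -- pointwise decomposition of `ψ τ1 τ2`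
  have hgae : ψ τ1 τ2 =ᵐ[μ]
      ({ω | u₁ θstar ω ≤ u₂ θstar ω}.indicator (ψ θstar θstar₂) +
        {ω | u₁ θstar ω ≤ u₂ θstar ω}ᶜ.indicator (ψ θstar₁ θstar)) := by
    filter_upwards [hψ.2 τ1 θstar τ2 θstar₂ hτ1 hθstar hτ2 hθstar₂,
      hψ.2 τ1 θstar₁ τ2 θstar hτ1 hθstar₁ hτ2 hθstar] with ω h1 h2
    by_cases hω : u₁ θstar ω ≤ u₂ θstar ω
    · have e1 : τ1 ω = θstar ω := by rw [hτ1def]; simp [hω]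
      have e2 : τ2 ω = θstar₂ ω := by rw [hτ2def]; simp [hω]
      have hmem : ω ∈ {ω | u₁ θstar ω ≤ u₂ θstar ω} := hω
      rw [Pi.add_apply, Set.indicator_of_mem hmem, Set.indicator_of_notMem (show ω ∉ _ᶜ from not_not_intro hmem),
        add_zero]
      exact h1 e1 e2
    · have e1 : τ1 ω = θstar₁ ω := by rw [hτ1def]; simp [hω]
      have e2 : τ2 ω = θstar ω := by rw [hτ2def]; simp [hω]
      have hnmem : ω ∉ {ω | u₁ θstar ω ≤ u₂ θstar ω} := hω
      rw [Pi.add_apply, Set.indicator_of_notMem hnmem, Set.indicator_of_mem (show ω ∈ _ᶜ from hnmem), zero_add]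
      exact h2 e1 e2
  -- conditional expectation at θ*
  have hcond1 : μ[ψ τ1 τ2 | hθstar.1.measurableSpace] =ᵐ[μ]
      fun ω => max (u₁ θstar ω) (u₂ θstar ω) := by
    have hadd := condExp_add (μ := μ) (m := hθstar.1.measurableSpace)
      (hint02.indicator hBm0) (hint10.indicator hBm0.compl)
    have h1 := condExp_indicator (μ := μ) hint02 hB
    have h2 := condExp_indicator (μ := μ) hint10 hB.compl
    have hc := condExp_congr_ae (m := hθstar.1.measurableSpace) hgae
    filter_upwards [hc, hadd, h1, h2, hopt₁, hopt₂] with ω hc' ha' h1' h2' ho1 ho2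
    rw [hc', ha', Pi.add_apply, h1', h2']
    by_cases hω : u₁ θstar ω ≤ u₂ θstar ω
    · have hmem : ω ∈ {ω | u₁ θstar ω ≤ u₂ θstar ω} := hω
      rw [Set.indicator_of_mem hmem, Set.indicator_of_notMem (show ω ∉ _ᶜ from not_not_intro hmem), add_zero,
        ← ho2, max_eq_right hω]
    · have hnmem : ω ∉ {ω | u₁ θstar ω ≤ u₂ θstar ω} := hω
      rw [Set.indicator_of_notMem hnmem, Set.indicator_of_mem (show ω ∈ _ᶜ from hnmem), zero_add,
        ← ho1, max_eq_left (le_of_lt (not_le.mp hω))]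
  have hmain : μ[ψ τ1 τ2 | hS.1.measurableSpace] =ᵐ[μ] uS := by
    calc μ[ψ τ1 τ2 | hS.1.measurableSpace]
        =ᵐ[μ] μ[μ[ψ τ1 τ2 | hθstar.1.measurableSpace] | hS.1.measurableSpace] :=
          (condExp_condExp_of_le hmSθ hm0θ).symm
      _ =ᵐ[μ] μ[fun ω => max (u₁ θstar ω) (u₂ θstar ω) | hS.1.measurableSpace] :=
          condExp_congr_ae hcond1
      _ =ᵐ[μ] uS := hopt.symm
  have h_uv : uS ≤ᵐ[μ] vS :=
    hmain.symm.le.trans (hvS.1 (τ1, τ2) ⟨hτ1, hτ2, hSτ1, hSτ2⟩)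
  have h_vu : vS ≤ᵐ[μ] uS := by
    refine hvS.2 uS ?_
    rintro ⟨τa, τb⟩ ⟨ha, hb, hSa, hSb⟩
    set θ : Ω → ℝ := fun ω => min (τa ω) (τb ω) with hθdef
    have hθmem : MemT0 𝓕 T θ :=
      ⟨ha.1.min hb.1, fun ω =>
        ⟨le_min (ha.2 ω).1 (hb.2 ω).1, le_trans (min_le_left _ _) (ha.2 ω).2⟩⟩
    have hSθ' : S ≤ᵐ[μ] θ := by
      filter_upwards [hSa, hSb] with ω h1 h2; exact le_min h1 h2
    have hmθ : hθmem.1.measurableSpace ≤ m0 := hθmem.1.measurableSpace_le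
    have hmSθ' : hS.1.measurableSpace ≤ hθmem.1.measurableSpace :=
      optAux_measurableSpace_mono_ae hFnull hS hθmem hSθ'
    have hAmem : MeasurableSet[hθmem.1.measurableSpace] {ω | τa ω ≤ τb ω} :=
      by
        rw [show {ω | τa ω ≤ τb ω} = {ω | (τa ω : WithTop ℝ) ≤ τb ω} by ext; simp]
        exact (IsStoppingTime.measurableSet_min_iff ha.1 hb.1 _).mpr
          ⟨IsStoppingTime.measurableSet_le_stopping_time ha.1 hb.1,
            IsStoppingTime.measurableSet_stopping_time_le ha.1 hb.1⟩
    have hA0 : MeasurableSet {ω | τa ω ≤ τb ω} := hmθ _ hAmem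
    set τb' : Ω → ℝ := fun ω => if τa ω ≤ τb ω then τb ω else θ ω with hτb'def
    set τa' : Ω → ℝ := fun ω => if τa ω ≤ τb ω then θ ω else τa ω with hτa'def
    have hθτb : θ ≤ᵐ[μ] τb := Filter.Eventually.of_forall fun ω => min_le_right _ _
    have hθτa : θ ≤ᵐ[μ] τa := Filter.Eventually.of_forall fun ω => min_le_left _ _
    have hb' : MemT0 𝓕 T τb' :=
      optAux_memT0_ite hFnull hθmem hb hθτb (fun ω => τa ω ≤ τb ω) hAmem
    have ha' : MemT0 𝓕 T τa' :=
      optAux_memT0_ite' hFnull hθmem ha hθτa (fun ω => τa ω ≤ τb ω) hAmem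
    have hθτb' : θ ≤ᵐ[μ] τb' := Filter.Eventually.of_forall fun ω => by
      show θ ω ≤ if τa ω ≤ τb ω then τb ω else θ ω
      split_ifs with h
      exacts [min_le_right _ _, le_rfl]
    have hθτa' : θ ≤ᵐ[μ] τa' := Filter.Eventually.of_forall fun ω => by
      show θ ω ≤ if τa ω ≤ τb ω then θ ω else τa ω
      split_ifs with h
      exacts [le_rfl, min_le_left _ _]
    have hgae' : ψ τa τb =ᵐ[μ]
        ({ω | τa ω ≤ τb ω}.indicator (ψ θ τb') +
          {ω | τa ω ≤ τb ω}ᶜ.indicator (ψ τa' θ)) := by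
      filter_upwards [hψ.2 τa θ τb τb' ha hθmem hb hb',
        hψ.2 τa τa' τb θ ha ha' hb hθmem] with ω h1 h2
      by_cases hω : τa ω ≤ τb ω
      · have e1 : τa ω = θ ω := (min_eq_left hω).symm
        have e2 : τb ω = τb' ω := by rw [hτb'def]; simp [hω]
        have hmem : ω ∈ {ω | τa ω ≤ τb ω} := hω
        rw [Pi.add_apply, Set.indicator_of_mem hmem, Set.indicator_of_notMem (show ω ∉ _ᶜ from not_not_intro hmem),
          add_zero]
        exact h1 e1 e2
      · have e1 : τa ω = τa' ω := by rw [hτa'def]; simp [hω]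
        have e2 : τb ω = θ ω := (min_eq_right (le_of_lt (not_le.mp hω))).symm
        have hnmem : ω ∉ {ω | τa ω ≤ τb ω} := hω
        rw [Pi.add_apply, Set.indicator_of_notMem hnmem, Set.indicator_of_mem (show ω ∈ _ᶜ from hnmem), zero_add]
        exact h2 e1 e2
    have hint1 : Integrable (ψ θ τb') μ := hψint _ _ hθmem hb'
    have hint2 : Integrable (ψ τa' θ) μ := hψint _ _ ha' hθmem
    have hcondle : μ[ψ τa τb | hθmem.1.measurableSpace] ≤ᵐ[μ]
        fun ω => max (u₁ θ ω) (u₂ θ ω) := by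
      have hadd := condExp_add (μ := μ) (m := hθmem.1.measurableSpace)
        (hint1.indicator hA0) (hint2.indicator hA0.compl)
      have h1 := condExp_indicator (μ := μ) hint1 hAmem
      have h2 := condExp_indicator (μ := μ) hint2 hAmem.compl
      have hc := condExp_congr_ae (m := hθmem.1.measurableSpace) hgae'
      have hle2 := (hu₂ θ hθmem).1 τb' ⟨hb', hθτb'⟩
      have hle1 := (hu₁ θ hθmem).1 τa' ⟨ha', hθτa'⟩
      filter_upwards [hc, hadd, h1, h2, hle1, hle2] with ω hc' ha2 h1' h2' hl1 hl2
      rw [hc', ha2, Pi.add_apply, h1', h2']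
      by_cases hω : τa ω ≤ τb ω
      · have hmem : ω ∈ {ω | τa ω ≤ τb ω} := hω
        rw [Set.indicator_of_mem hmem, Set.indicator_of_notMem (show ω ∉ _ᶜ from not_not_intro hmem), add_zero]
        exact le_trans hl2 (le_max_right _ _)
      · have hnmem : ω ∉ {ω | τa ω ≤ τb ω} := hω
        rw [Set.indicator_of_notMem hnmem, Set.indicator_of_mem (show ω ∈ _ᶜ from hnmem), zero_add]
        exact le_trans hl1 (le_max_left _ _)
    have hφint : Integrable (fun ω => max (u₁ θ ω) (u₂ θ ω)) μ :=
      (hu₁int θ hθmem).sup (hu₂int θ hθmem)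
    exact (condExp_condExp_of_le hmSθ' hmθ).symm.le.trans
      ((condExp_mono integrable_condExp hφint hcondle).trans (huS.1 θ ⟨hθmem, hSθ'⟩))
  exact (h_vu.antisymm h_uv).trans hmain.symm
end

section
/- Let {ψ(θ,S), θ,S ∈ T_0} be a biadmissible family of nonnegative random variables with E[ess sup_{θ,S ∈ T_0} ψ(θ,S)] < ∞, which is uniformly right continuous in expectation along stopping times. For θ, S ∈ T_0 define U_1(θ,S) = ess sup_{τ_1 ∈ T_θ} E[ψ(τ_1, S) | F_θ]. Then {U_1(θ,S)} is jointly right continuous in expectation along stopping times: for any θ, S ∈ T_0 and any sequences θ_n ↓ θ a.s. and S_n ↓ S a.s. of stopping times, E[U_1(θ_n, S_n)] → E[U_1(θ, S)]. -/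
open MeasureTheory Filter Set Topology

variable {Ω : Type*}

section EssSupConstruction

variable {m0 : MeasurableSpace Ω} {μ : MeasureTheory.Measure Ω} {ι : Type*}

/-- max of a finite list of members of a family, with default `f i₀`. -/
def famMax (f : ι → Ω → ℝ) (i₀ : ι) (l : List ι) (ω : Ω) : ℝ :=
  l.foldr (fun i r => f i ω ⊔ r) (f i₀ ω)

lemma famMax_nil (f : ι → Ω → ℝ) (i₀ : ι) (ω : Ω) : famMax f i₀ [] ω = f i₀ ω := rfl

lemma famMax_cons (f : ι → Ω → ℝ) (i₀ i : ι) (l : List ι) (ω : Ω) :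
    famMax f i₀ (i :: l) ω = f i ω ⊔ famMax f i₀ l ω := rfl

lemma famMax_base (f : ι → Ω → ℝ) (i₀ : ι) (l : List ι) (ω : Ω) :
    f i₀ ω ≤ famMax f i₀ l ω := by
  induction l with
  | nil => exact le_rfl
  | cons i l ih => exact ih.trans (le_sup_right)

lemma famMax_mem (f : ι → Ω → ℝ) (i₀ : ι) {i : ι} {l : List ι} (hi : i ∈ l) (ω : Ω) :
    f i ω ≤ famMax f i₀ l ω := by
  induction l with
  | nil => simp at hi
  | cons j l ih =>
    rcases List.mem_cons.1 hi with h | h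
    · subst h; exact le_sup_left
    · exact (ih h).trans le_sup_right

lemma famMax_append_right (f : ι → Ω → ℝ) (i₀ : ι) (l₁ l₂ : List ι) (ω : Ω) :
    famMax f i₀ l₂ ω ≤ famMax f i₀ (l₁ ++ l₂) ω := by
  induction l₁ with
  | nil => exact le_rfl
  | cons i l ih => exact ih.trans le_sup_right

lemma famMax_append_left (f : ι → Ω → ℝ) (i₀ : ι) (l₁ l₂ : List ι) (ω : Ω) :
    famMax f i₀ l₁ ω ≤ famMax f i₀ (l₁ ++ l₂) ω := by
  induction l₁ with
  | nil => exact famMax_base f i₀ l₂ ω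
  | cons i l ih => exact sup_le_sup le_rfl ih

lemma famMax_integrable (f : ι → Ω → ℝ) (i₀ : ι) (h0 : Integrable (f i₀) μ)
    {l : List ι} (h : ∀ i ∈ l, Integrable (f i) μ) : Integrable (famMax f i₀ l) μ := by
  induction l with
  | nil => exact h0
  | cons i l ih =>
    have := (h i (List.mem_cons_self)).sup (ih fun j hj => h j (List.mem_cons_of_mem i hj))
    exact this
  
lemma famMax_le_ae (f : ι → Ω → ℝ) (i₀ : ι) {w : Ω → ℝ} (h0 : f i₀ ≤ᵐ[μ] w)
    {l : List ι} (h : ∀ i ∈ l, f i ≤ᵐ[μ] w) : famMax f i₀ l ≤ᵐ[μ] w := by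
  induction l with
  | nil => exact h0
  | cons i l ih =>
    filter_upwards [h i (List.mem_cons_self),
      ih fun j hj => h j (List.mem_cons_of_mem i hj)] with ω h1 h2
    exact sup_le h1 h2

theorem exists_essSupFam (P : ι → Prop) (f : ι → Ω → ℝ) (i₀ : ι) (hi₀ : P i₀)
    (hint : ∀ i, P i → Integrable (f i) μ)
    (g : Ω → ℝ) (hg : Integrable g μ) (hfg : ∀ i, P i → f i ≤ᵐ[μ] g) :
    ∃ v : Ω → ℝ, Integrable v μ ∧ IsEssSupFam μ P f v ∧
      ((∀ i j, P i → P j → ∃ k, P k ∧ f i ≤ᵐ[μ] f k ∧ f j ≤ᵐ[μ] f k) →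
        ∀ ε : ℝ, 0 < ε → ∃ i, P i ∧ (∫ ω, v ω ∂μ) < (∫ ω, f i ω ∂μ) + ε) := by
  set s : Set ℝ := {x | ∃ l : List ι, (∀ i ∈ l, P i) ∧ x = ∫ ω, famMax f i₀ l ω ∂μ} with hs
  have h0int : Integrable (f i₀) μ := hint i₀ hi₀
  have hsne : s.Nonempty := ⟨_, [], by simp, rfl⟩
  have hub : ∀ x ∈ s, x ≤ ∫ ω, g ω ∂μ := by
    rintro x ⟨l, hl, rfl⟩
    exact integral_mono_ae (famMax_integrable f i₀ h0int fun i hi => hint i (hl i hi)) hg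
      (famMax_le_ae f i₀ (hfg i₀ hi₀) fun i hi => hfg i (hl i hi))
  have hbdd : BddAbove s := ⟨_, hub⟩
  set c := sSup s with hc
  have hchoice : ∀ n : ℕ, ∃ l : List ι, (∀ i ∈ l, P i) ∧
      c - 1 / (n + 1) < ∫ ω, famMax f i₀ l ω ∂μ := by
    intro n
    obtain ⟨x, hxs, hx⟩ := exists_lt_of_lt_csSup hsne
      (show c - 1 / ((n : ℝ) + 1) < c from sub_lt_self c (by positivity))
    obtain ⟨l, hl, rfl⟩ := hxs
    exact ⟨l, hl, hx⟩
  choose l hlP hlc using hchoice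
  set L : ℕ → List ι := fun n => Nat.rec (l 0) (fun m Lm => l (m + 1) ++ Lm) n with hL
  have hLP : ∀ n, ∀ i ∈ L n, P i := by
    intro n
    induction n with
    | zero => exact hlP 0
    | succ m ih =>
      intro i hi
      rcases List.mem_append.1 hi with h | h
      · exact hlP (m + 1) i h
      · exact ih i h
  have hmono : ∀ n ω, famMax f i₀ (L n) ω ≤ famMax f i₀ (L (n + 1)) ω := fun n ω =>
    famMax_append_right f i₀ (l (n + 1)) (L n) ω
  have hlL : ∀ n ω, famMax f i₀ (l n) ω ≤ famMax f i₀ (L n) ω := by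
    intro n ω
    cases n with
    | zero => exact le_rfl
    | succ m => exact famMax_append_left f i₀ (l (m + 1)) (L m) ω
  have hLint : ∀ n, Integrable (famMax f i₀ (L n)) μ := fun n =>
    famMax_integrable f i₀ h0int fun i hi => hint i (hLP n i hi)
  have hLg : ∀ n, famMax f i₀ (L n) ≤ᵐ[μ] g := fun n =>
    famMax_le_ae f i₀ (hfg i₀ hi₀) fun i hi => hfg i (hLP n i hi)
  have haeg : ∀ᵐ ω ∂μ, ∀ n, famMax f i₀ (L n) ω ≤ g ω := ae_all_iff.2 hLg
  have haelim : ∀ᵐ ω ∂μ, ∃ x, Tendsto (fun n => famMax f i₀ (L n) ω) atTop (𝓝 x) := by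
    filter_upwards [haeg] with ω hω
    refine ⟨_, tendsto_atTop_ciSup (monotone_nat_of_le_succ fun n => hmono n ω) ?_⟩
    exact ⟨g ω, by rintro x ⟨n, rfl⟩; exact hω n⟩
  obtain ⟨v, hvm, hvt⟩ := exists_stronglyMeasurable_limit_of_tendsto_ae
    (fun n => (hLint n).1) haelim
  set B : Ω → ℝ := fun ω => |f i₀ ω| + |g ω| with hB
  have hBint : Integrable B μ := h0int.abs.add hg.abs
  have hbound : ∀ n, ∀ᵐ ω ∂μ, ‖famMax f i₀ (L n) ω‖ ≤ B ω := by
    intro n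
    filter_upwards [hLg n] with ω hω
    rw [Real.norm_eq_abs, abs_le]
    have h1 := famMax_base f i₀ (L n) ω
    have h2 := neg_abs_le (f i₀ ω)
    have h3 := le_abs_self (g ω)
    have h4 := abs_nonneg (f i₀ ω)
    have h5 := abs_nonneg (g ω)
    constructor <;> simp only [hB] <;> linarith
  have hvB : ∀ᵐ ω ∂μ, ‖v ω‖ ≤ B ω := by
    filter_upwards [hvt, ae_all_iff.2 hbound] with ω h1 h2
    exact le_of_tendsto h1.norm (Eventually.of_forall h2)
  have hvint : Integrable v μ := hBint.mono' hvm.aestronglyMeasurable hvB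
  have hIt : Tendsto (fun n => ∫ ω, famMax f i₀ (L n) ω ∂μ) atTop (𝓝 (∫ ω, v ω ∂μ)) :=
    tendsto_integral_of_dominated_convergence B (fun n => (hLint n).1) hBint hbound hvt
  have hLle : ∀ n, ∫ ω, famMax f i₀ (L n) ω ∂μ ≤ c := fun n =>
    le_csSup hbdd ⟨L n, hLP n, rfl⟩
  have hLge : ∀ n : ℕ, c - 1 / ((n : ℝ) + 1) ≤ ∫ ω, famMax f i₀ (L n) ω ∂μ := fun n =>
    (hlc n).le.trans (integral_mono (famMax_integrable f i₀ h0int fun i hi => hint i (hlP n i hi))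
      (hLint n) fun ω => hlL n ω)
  have hclim : Tendsto (fun n : ℕ => c - 1 / ((n : ℝ) + 1)) atTop (𝓝 c) := by
    have h0 : Tendsto (fun _ : ℕ => c) atTop (𝓝 c) := tendsto_const_nhds
    simpa using h0.sub tendsto_one_div_add_atTop_nhds_zero_nat
  have hvc : ∫ ω, v ω ∂μ = c :=
    le_antisymm (le_of_tendsto hIt (Eventually.of_forall hLle))
      (le_of_tendsto_of_tendsto' hclim hIt hLge)
  refine ⟨v, hvint, ⟨?_, ?_⟩, ?_⟩
  · intro i hi
    have hmeas : ∀ n, AEStronglyMeasurable (famMax f i₀ (i :: L n)) μ := fun n =>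
      (famMax_integrable f i₀ h0int (l := i :: L n) (by
        intro j hj
        rcases List.mem_cons.1 hj with h | h
        · subst h; exact hint _ hi
        · exact hint j (hLP n j h))).1
    have hintc : ∀ n, Integrable (famMax f i₀ (i :: L n)) μ := fun n =>
      famMax_integrable f i₀ h0int (l := i :: L n) (by
        intro j hj
        rcases List.mem_cons.1 hj with h | h
        · subst h; exact hint _ hi
        · exact hint j (hLP n j h))
    have hbound2 : ∀ n, ∀ᵐ ω ∂μ, ‖famMax f i₀ (i :: L n) ω‖ ≤ |f i ω| + B ω := by
      intro n
      filter_upwards [hbound n] with ω hω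
      rw [famMax_cons, Real.norm_eq_abs, abs_le]
      rw [Real.norm_eq_abs] at hω
      have h2 := neg_abs_le (f i ω)
      have h3 := le_abs_self (f i ω)
      have h4 := abs_nonneg (f i ω)
      have h5 := abs_le.1 hω
      rcases le_total (f i ω) (famMax f i₀ (L n) ω) with h | h
      · rw [sup_eq_right.2 h]; constructor <;> linarith [h5.1, h5.2]
      · rw [sup_eq_left.2 h]
        have hBnn : 0 ≤ B ω := by simp only [hB]; positivity
        constructor <;> linarith [h5.1, h5.2]
    have hlim2 : ∀ᵐ ω ∂μ, Tendsto (fun n => famMax f i₀ (i :: L n) ω) atTop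
        (𝓝 (f i ω ⊔ v ω)) := by
      filter_upwards [hvt] with ω hω
      simpa only [famMax_cons] using (tendsto_const_nhds (x := f i ω)).max hω
    have hTi : Tendsto (fun n => ∫ ω, famMax f i₀ (i :: L n) ω ∂μ) atTop
        (𝓝 (∫ ω, (f i ω ⊔ v ω) ∂μ)) :=
      tendsto_integral_of_dominated_convergence (fun ω => |f i ω| + B ω) hmeas
        ((hint i hi).abs.add hBint) hbound2 hlim2
    have hle2 : ∀ n, ∫ ω, famMax f i₀ (i :: L n) ω ∂μ ≤ c := fun n =>
      le_csSup hbdd ⟨i :: L n, by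
        intro j hj
        rcases List.mem_cons.1 hj with h | h
        · subst h; exact hi
        · exact hLP n j h, rfl⟩
    have hsupv : ∫ ω, (f i ω ⊔ v ω) ∂μ ≤ ∫ ω, v ω ∂μ := by
      rw [hvc]; exact le_of_tendsto hTi (Eventually.of_forall hle2)
    have hnn : 0 ≤ fun ω => (f i ω ⊔ v ω) - v ω := fun ω => sub_nonneg.2 le_sup_right
    have hisup : Integrable (fun ω => f i ω ⊔ v ω) μ := (hint i hi).sup hvint
    have hint2 : Integrable (fun ω => (f i ω ⊔ v ω) - v ω) μ := hisup.sub hvint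
    have hI0 : ∫ ω, ((f i ω ⊔ v ω) - v ω) ∂μ = 0 := by
      refine le_antisymm ?_ (integral_nonneg hnn)
      rw [integral_sub hisup hvint]
      linarith
    have hae0 := (integral_eq_zero_iff_of_nonneg hnn hint2).1 hI0
    filter_upwards [hae0] with ω hω
    have : f i ω ⊔ v ω = v ω := by
      have : (f i ω ⊔ v ω) - v ω = 0 := hω
      linarith [this]
    exact le_sup_left.trans this.le
  · intro w hw
    have hLw : ∀ n, famMax f i₀ (L n) ≤ᵐ[μ] w := fun n =>
      famMax_le_ae f i₀ (hw i₀ hi₀) fun i hi => hw i (hLP n i hi)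
    filter_upwards [hvt, ae_all_iff.2 hLw] with ω h1 h2
    exact le_of_tendsto h1 (Eventually.of_forall h2)
  · intro hdir ε hε
    have hkey : ∀ l' : List ι, (∀ i ∈ l', P i) → ∃ k, P k ∧ famMax f i₀ l' ≤ᵐ[μ] f k := by
      intro l' hl'
      induction l' with
      | nil => exact ⟨i₀, hi₀, Eventually.of_forall fun ω => le_rfl⟩
      | cons i t ih =>
        obtain ⟨k', hk', hfk'⟩ := ih fun j hj => hl' j (List.mem_cons_of_mem i hj)
        obtain ⟨k, hk, h1, h2⟩ := hdir i k' (hl' i (List.mem_cons_self)) hk'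
        refine ⟨k, hk, ?_⟩
        filter_upwards [hfk', h1, h2] with ω ha hb hc2
        rw [famMax_cons]
        exact sup_le hb (ha.trans hc2)
    obtain ⟨x, hxs, hx⟩ := exists_lt_of_lt_csSup hsne (show c - ε < c from sub_lt_self c hε)
    obtain ⟨l', hl', rfl⟩ := hxs
    obtain ⟨k, hk, hfk⟩ := hkey l' hl'
    refine ⟨k, hk, ?_⟩
    have hle3 : ∫ ω, famMax f i₀ l' ω ∂μ ≤ ∫ ω, f k ω ∂μ :=
      integral_mono_ae (famMax_integrable f i₀ h0int fun i hi => hint i (hl' i hi))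
        (hint k hk) hfk
    rw [hvc]
    linarith

end EssSupConstruction


section PasteAux

variable {m0 : MeasurableSpace Ω} {μ : MeasureTheory.Measure Ω}
  {𝓕 : MeasureTheory.Filtration ℝ m0} {T : ℝ}

lemma IsEssSupFam.ae_eq' {ι : Sort*} {P : ι → Prop} {f : ι → Ω → ℝ} {v w : Ω → ℝ}
    (h1 : IsEssSupFam μ P f v) (h2 : IsEssSupFam μ P f w) : v =ᵐ[μ] w :=
  (h1.2 w h2.1).antisymm (h2.2 v h1.1)

lemma MemT0.sup {τ σ : Ω → ℝ} (hτ : MemT0 𝓕 T τ) (hσ : MemT0 𝓕 T σ) :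
    MemT0 𝓕 T (fun ω => τ ω ⊔ σ ω) := by
  refine ⟨hτ.1.max hσ.1, fun ω => ?_⟩
  obtain ⟨h1, h2⟩ := hτ.2 ω
  obtain ⟨h3, h4⟩ := hσ.2 ω
  exact ⟨le_sup_of_le_left h1, sup_le h2 h4⟩

lemma memT0_piecewise_s13 {θ τ η : Ω → ℝ} (hθ : MeasureTheory.IsStoppingTime 𝓕 (fun ω => (θ ω : WithTop ℝ)))
    (hτ : MemT0 𝓕 T τ) (hη : MemT0 𝓕 T η)
    (hθτ : ∀ ω, θ ω ≤ τ ω) (hθη : ∀ ω, θ ω ≤ η ω)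
    {A : Set Ω} [DecidablePred (· ∈ A)] (hA : MeasurableSet[hθ.measurableSpace] A) :
    MemT0 𝓕 T (A.piecewise τ η) := by
  constructor
  · intro t
    have hset : {ω | ((A.piecewise τ η ω : ℝ) : WithTop ℝ) ≤ (t : WithTop ℝ)} =
        (A ∩ {ω | (θ ω : WithTop ℝ) ≤ t} ∩ {ω | (τ ω : WithTop ℝ) ≤ t}) ∪
          (Aᶜ ∩ {ω | (θ ω : WithTop ℝ) ≤ t} ∩ {ω | (η ω : WithTop ℝ) ≤ t}) := by
      ext ω
      simp only [Set.mem_setOf_eq, Set.mem_union, Set.mem_inter_iff, Set.mem_compl_iff]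
      by_cases hω : ω ∈ A
      · rw [Set.piecewise_eq_of_mem _ _ _ hω]
        constructor
        · intro h; exact Or.inl ⟨⟨hω, (WithTop.coe_le_coe.2 (hθτ ω)).trans h⟩, h⟩
        · rintro (⟨⟨_, _⟩, h⟩ | ⟨⟨h', _⟩, _⟩)
          · exact h
          · exact absurd hω h'
      · rw [Set.piecewise_eq_of_notMem _ _ _ hω]
        constructor
        · intro h; exact Or.inr ⟨⟨hω, (WithTop.coe_le_coe.2 (hθη ω)).trans h⟩, h⟩
        · rintro (⟨⟨h', _⟩, _⟩ | ⟨⟨_, _⟩, h⟩)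
          · exact absurd h' hω
          · exact h
    rw [hset]
    exact ((((hθ.measurableSet A).1 hA).2 t).inter (hτ.1 t)).union
      ((((hθ.measurableSet Aᶜ).1 (MeasurableSet.compl hA)).2 t).inter (hη.1 t))
  · intro ω
    by_cases hω : ω ∈ A
    · rw [Set.piecewise_eq_of_mem _ _ _ hω]; exact hτ.2 ω
    · rw [Set.piecewise_eq_of_notMem _ _ _ hω]; exact hη.2 ω

lemma DownAS.le_ae {θn : ℕ → Ω → ℝ} {θ : Ω → ℝ} (h : DownAS μ θn θ) :
    ∀ᵐ ω ∂μ, ∀ n, θ ω ≤ θn n ω := by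
  filter_upwards [h] with ω hω n
  obtain ⟨h1, h2⟩ := hω
  have hanti : Antitone fun m => θn m ω := antitone_nat_of_succ_le h1
  exact le_of_tendsto h2 (Filter.eventually_atTop.2 ⟨n, fun m hm => hanti hm⟩)

end PasteAux

section MainAux

variable {m0 : MeasurableSpace Ω} {μ : MeasureTheory.Measure Ω}
  {𝓕 : MeasureTheory.Filtration ℝ m0} {T : ℝ}
  {ψ : (Ω → ℝ) → (Ω → ℝ) → Ω → ℝ} {Z : Ω → ℝ}

lemma psi_meas (hψ : Biadmissible 𝓕 T μ ψ) {τ σ : Ω → ℝ} (hτ : MemT0 𝓕 T τ)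
    (hσ : MemT0 𝓕 T σ) : Measurable (ψ τ σ) :=
  ((hψ.1 τ σ hτ hσ).1).mono (hτ.1.max hσ.1).measurableSpace_le le_rfl

lemma psi_le_Z
    (hZ : IsEssSupFam μ (fun p : (Ω → ℝ) × (Ω → ℝ) => MemT0 𝓕 T p.1 ∧ MemT0 𝓕 T p.2)
      (fun p => ψ p.1 p.2) Z)
    {τ σ : Ω → ℝ} (hτ : MemT0 𝓕 T τ) (hσ : MemT0 𝓕 T σ) : ψ τ σ ≤ᵐ[μ] Z :=
  hZ.1 (τ, σ) ⟨hτ, hσ⟩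

lemma psi_int (hψ : Biadmissible 𝓕 T μ ψ)
    (hZ : IsEssSupFam μ (fun p : (Ω → ℝ) × (Ω → ℝ) => MemT0 𝓕 T p.1 ∧ MemT0 𝓕 T p.2)
      (fun p => ψ p.1 p.2) Z)
    (hZint : Integrable Z μ)
    {τ σ : Ω → ℝ} (hτ : MemT0 𝓕 T τ) (hσ : MemT0 𝓕 T σ) : Integrable (ψ τ σ) μ := by
  refine hZint.mono' (psi_meas hψ hτ hσ).aestronglyMeasurable ?_
  filter_upwards [psi_le_Z hZ hτ hσ] with ω hω
  rw [Real.norm_eq_abs, abs_of_nonneg ((hψ.1 τ σ hτ hσ).2 ω)]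
  exact hω

lemma condexp_fam_directed [IsProbabilityMeasure μ] (hψ : Biadmissible 𝓕 T μ ψ)
    (hZ : IsEssSupFam μ (fun p : (Ω → ℝ) × (Ω → ℝ) => MemT0 𝓕 T p.1 ∧ MemT0 𝓕 T p.2)
      (fun p => ψ p.1 p.2) Z)
    (hZint : Integrable Z μ)
    {θ S : Ω → ℝ} (hθ : MemT0 𝓕 T θ) (hS : MemT0 𝓕 T S) :
    ∀ τ1 τ2, (MemT0 𝓕 T τ1 ∧ θ ≤ᵐ[μ] τ1) → (MemT0 𝓕 T τ2 ∧ θ ≤ᵐ[μ] τ2) →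
      ∃ τ3, (MemT0 𝓕 T τ3 ∧ θ ≤ᵐ[μ] τ3) ∧
        μ[ψ τ1 S|hθ.1.measurableSpace] ≤ᵐ[μ] μ[ψ τ3 S|hθ.1.measurableSpace] ∧
        μ[ψ τ2 S|hθ.1.measurableSpace] ≤ᵐ[μ] μ[ψ τ3 S|hθ.1.measurableSpace] := by
  classical
  rintro τ1 τ2 ⟨hτ1, hθ1⟩ ⟨hτ2, hθ2⟩
  have hm : hθ.1.measurableSpace ≤ m0 := hθ.1.measurableSpace_le
  set τ1' : Ω → ℝ := fun ω => τ1 ω ⊔ θ ω with hτ1'def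
  set τ2' : Ω → ℝ := fun ω => τ2 ω ⊔ θ ω with hτ2'def
  have hτ1' : MemT0 𝓕 T τ1' := MemT0.sup hτ1 hθ
  have hτ2' : MemT0 𝓕 T τ2' := MemT0.sup hτ2 hθ
  have hθτ1' : ∀ ω, θ ω ≤ τ1' ω := fun ω => le_sup_right
  have hθτ2' : ∀ ω, θ ω ≤ τ2' ω := fun ω => le_sup_right
  have heq1 : τ1' =ᵐ[μ] τ1 := by filter_upwards [hθ1] with ω h using sup_eq_left.2 h
  have heq2 : τ2' =ᵐ[μ] τ2 := by filter_upwards [hθ2] with ω h using sup_eq_left.2 h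
  have hψeq1 : ψ τ1' S =ᵐ[μ] ψ τ1 S := by
    filter_upwards [hψ.2 τ1' τ1 S S hτ1' hτ1 hS hS, heq1] with ω h he using h he rfl
  have hψeq2 : ψ τ2' S =ᵐ[μ] ψ τ2 S := by
    filter_upwards [hψ.2 τ2' τ2 S S hτ2' hτ2 hS hS, heq2] with ω h he using h he rfl
  have hc1 : μ[ψ τ1' S|hθ.1.measurableSpace] =ᵐ[μ] μ[ψ τ1 S|hθ.1.measurableSpace] := condExp_congr_ae hψeq1
  have hc2 : μ[ψ τ2' S|hθ.1.measurableSpace] =ᵐ[μ] μ[ψ τ2 S|hθ.1.measurableSpace] := condExp_congr_ae hψeq2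
  set F1 : Ω → ℝ := μ[ψ τ1' S|hθ.1.measurableSpace] with hF1def
  set F2 : Ω → ℝ := μ[ψ τ2' S|hθ.1.measurableSpace] with hF2def
  set A : Set Ω := {ω | F2 ω ≤ F1 ω} with hAdef
  have hAm : MeasurableSet[hθ.1.measurableSpace] A := by
    have h1 : StronglyMeasurable[hθ.1.measurableSpace] F1 := stronglyMeasurable_condExp
    have h2 : StronglyMeasurable[hθ.1.measurableSpace] F2 := stronglyMeasurable_condExp
    exact h2.measurableSet_le h1
  set τ3 : Ω → ℝ := A.piecewise τ1' τ2' with hτ3def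
  have hτ3 : MemT0 𝓕 T τ3 := memT0_piecewise_s13 hθ.1 hτ1' hτ2' hθτ1' hθτ2' hAm
  have hθτ3 : ∀ ω, θ ω ≤ τ3 ω := by
    intro ω
    by_cases hω : ω ∈ A
    · rw [hτ3def, Set.piecewise_eq_of_mem _ _ _ hω]; exact hθτ1' ω
    · rw [hτ3def, Set.piecewise_eq_of_notMem _ _ _ hω]; exact hθτ2' ω
  have hAm0 : MeasurableSet A := hm A hAm
  have hint1 : Integrable (A.indicator (ψ τ1' S)) μ :=
    (psi_int hψ hZ hZint hτ1' hS).indicator hAm0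
  have hint2 : Integrable (Aᶜ.indicator (ψ τ2' S)) μ :=
    (psi_int hψ hZ hZint hτ2' hS).indicator hAm0.compl
  have hps : ψ τ3 S =ᵐ[μ] A.indicator (ψ τ1' S) + Aᶜ.indicator (ψ τ2' S) := by
    filter_upwards [hψ.2 τ3 τ1' S S hτ3 hτ1' hS hS, hψ.2 τ3 τ2' S S hτ3 hτ2' hS hS]
      with ω h1 h2
    by_cases hω : ω ∈ A
    · rw [h1 (by rw [hτ3def, Set.piecewise_eq_of_mem _ _ _ hω]) rfl]
      rw [Pi.add_apply, Set.indicator_of_mem hω, Set.indicator_of_notMem (by simpa using hω),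
        add_zero]
    · rw [h2 (by rw [hτ3def, Set.piecewise_eq_of_notMem _ _ _ hω]) rfl]
      rw [Pi.add_apply, Set.indicator_of_notMem hω, Set.indicator_of_mem (by simpa using hω),
        zero_add]
  have hcond : μ[ψ τ3 S|hθ.1.measurableSpace] =ᵐ[μ]
      fun ω => A.indicator F1 ω + Aᶜ.indicator F2 ω := by
    have e1 : μ[ψ τ3 S|hθ.1.measurableSpace] =ᵐ[μ] μ[A.indicator (ψ τ1' S) + Aᶜ.indicator (ψ τ2' S)|hθ.1.measurableSpace] :=
      condExp_congr_ae hps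
    have e2 : μ[A.indicator (ψ τ1' S) + Aᶜ.indicator (ψ τ2' S)|hθ.1.measurableSpace] =ᵐ[μ]
        μ[A.indicator (ψ τ1' S)|hθ.1.measurableSpace] + μ[Aᶜ.indicator (ψ τ2' S)|hθ.1.measurableSpace] := condExp_add hint1 hint2 _
    have e3 := condExp_indicator (m := hθ.1.measurableSpace) (psi_int hψ hZ hZint hτ1' hS) hAm
    have e4 := condExp_indicator (m := hθ.1.measurableSpace) (psi_int hψ hZ hZint hτ2' hS)
      (MeasurableSet.compl hAm)
    filter_upwards [e1, e2, e3, e4] with ω a1 a2 a3 a4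
    rw [a1, a2, Pi.add_apply, a3, a4]
  have hmax : ∀ ω, A.indicator F1 ω + Aᶜ.indicator F2 ω = F1 ω ⊔ F2 ω := by
    intro ω
    by_cases hω : ω ∈ A
    · rw [Set.indicator_of_mem hω, Set.indicator_of_notMem (by simpa using hω), add_zero,
        sup_eq_left.2 (show F2 ω ≤ F1 ω from hω)]
    · rw [Set.indicator_of_notMem hω, Set.indicator_of_mem (by simpa using hω), zero_add,
        sup_eq_right.2 (le_of_not_ge (show ¬ F2 ω ≤ F1 ω from hω))]
  refine ⟨τ3, ⟨hτ3, Filter.Eventually.of_forall hθτ3⟩, ?_, ?_⟩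
  · filter_upwards [hc1, hcond] with ω h1 h2
    rw [h2, hmax ω, ← h1]
    exact le_sup_left
  · filter_upwards [hc2, hcond] with ω h1 h2
    rw [h2, hmax ω, ← h1]
    exact le_sup_right

lemma exists_V [IsProbabilityMeasure μ] (hψ : Biadmissible 𝓕 T μ ψ)
    (hZ : IsEssSupFam μ (fun p : (Ω → ℝ) × (Ω → ℝ) => MemT0 𝓕 T p.1 ∧ MemT0 𝓕 T p.2)
      (fun p => ψ p.1 p.2) Z)
    (hZint : Integrable Z μ)
    {θ S : Ω → ℝ} (hθ : MemT0 𝓕 T θ) (hS : MemT0 𝓕 T S) :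
    ∃ v : Ω → ℝ, Integrable v μ ∧
      IsEssSupFam μ (fun τ => MemT0 𝓕 T τ ∧ θ ≤ᵐ[μ] τ)
        (fun τ => μ[ψ τ S|hθ.1.measurableSpace]) v ∧
      (∀ ε : ℝ, 0 < ε → ∃ τ, (MemT0 𝓕 T τ ∧ θ ≤ᵐ[μ] τ) ∧
          (∫ ω, v ω ∂μ) < (∫ ω, ψ τ S ω ∂μ) + ε) ∧
      (∀ τ, MemT0 𝓕 T τ → θ ≤ᵐ[μ] τ → (∫ ω, ψ τ S ω ∂μ) ≤ ∫ ω, v ω ∂μ) := by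
  have hm : hθ.1.measurableSpace ≤ m0 := hθ.1.measurableSpace_le
  obtain ⟨v, hvint, hvsup, hvdir⟩ := exists_essSupFam (μ := μ)
    (fun τ => MemT0 𝓕 T τ ∧ θ ≤ᵐ[μ] τ) (fun τ => μ[ψ τ S|hθ.1.measurableSpace]) θ
    ⟨hθ, EventuallyLE.refl _ _⟩ (fun τ _ => integrable_condExp)
    (μ[Z|hθ.1.measurableSpace]) integrable_condExp
    (fun τ hτ => condExp_mono (psi_int hψ hZ hZint hτ.1 hS) hZint (psi_le_Z hZ hτ.1 hS))
  have hIC : ∀ τ, MemT0 𝓕 T τ →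
      (∫ ω, (μ[ψ τ S|hθ.1.measurableSpace]) ω ∂μ) = ∫ ω, ψ τ S ω ∂μ :=
    fun τ _ => integral_condExp hm
  refine ⟨v, hvint, hvsup, ?_, ?_⟩
  · intro ε hε
    obtain ⟨τ, hτ, hlt⟩ := hvdir (condexp_fam_directed hψ hZ hZint hθ hS) ε hε
    exact ⟨τ, hτ, by rwa [hIC τ hτ.1] at hlt⟩
  · intro τ hτ hθτ
    have h := integral_mono_ae integrable_condExp hvint (hvsup.1 τ ⟨hτ, hθτ⟩)
    rwa [hIC τ hτ] at h

lemma exists_D2 (hψ : Biadmissible 𝓕 T μ ψ)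
    (hZ : IsEssSupFam μ (fun p : (Ω → ℝ) × (Ω → ℝ) => MemT0 𝓕 T p.1 ∧ MemT0 𝓕 T p.2)
      (fun p => ψ p.1 p.2) Z)
    (hZint : Integrable Z μ) (hT : 0 ≤ T)
    {a b : Ω → ℝ} (ha : MemT0 𝓕 T a) (hb : MemT0 𝓕 T b) :
    ∃ D : Ω → ℝ, Integrable D μ ∧
      IsEssSupFam μ (MemT0 𝓕 T) (fun τ ω => |ψ τ a ω - ψ τ b ω|) D := by
  have h0 : MemT0 𝓕 T (fun _ => (0 : ℝ)) :=
    ⟨isStoppingTime_const 𝓕 0, fun _ => ⟨le_rfl, hT⟩⟩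
  have hintD : ∀ τ, MemT0 𝓕 T τ → Integrable (fun ω => |ψ τ a ω - ψ τ b ω|) μ := by
    intro τ hτ
    refine (hZint.add hZint).mono'
      (((psi_meas hψ hτ ha).sub (psi_meas hψ hτ hb)).abs).aestronglyMeasurable ?_
    filter_upwards [psi_le_Z hZ hτ ha, psi_le_Z hZ hτ hb] with ω h1 h2
    have n1 := (hψ.1 τ a hτ ha).2 ω
    have n2 := (hψ.1 τ b hτ hb).2 ω
    rw [Real.norm_eq_abs, abs_abs, Pi.add_apply, abs_le]
    constructor <;> linarith
  have hbd : ∀ τ, MemT0 𝓕 T τ → (fun ω => |ψ τ a ω - ψ τ b ω|) ≤ᵐ[μ] (Z + Z) := by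
    intro τ hτ
    filter_upwards [psi_le_Z hZ hτ ha, psi_le_Z hZ hτ hb] with ω h1 h2
    have n1 := (hψ.1 τ a hτ ha).2 ω
    have n2 := (hψ.1 τ b hτ hb).2 ω
    rw [Pi.add_apply, abs_le]
    constructor <;> linarith
  obtain ⟨v, h1, h2, _⟩ := exists_essSupFam (μ := μ) (MemT0 𝓕 T)
    (fun τ ω => |ψ τ a ω - ψ τ b ω|) (fun _ => 0) h0 hintD (Z + Z) (hZint.add hZint) hbd
  exact ⟨v, h1, h2⟩

lemma exists_D1 (hψ : Biadmissible 𝓕 T μ ψ)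
    (hZ : IsEssSupFam μ (fun p : (Ω → ℝ) × (Ω → ℝ) => MemT0 𝓕 T p.1 ∧ MemT0 𝓕 T p.2)
      (fun p => ψ p.1 p.2) Z)
    (hZint : Integrable Z μ) (hT : 0 ≤ T)
    {a b : Ω → ℝ} (ha : MemT0 𝓕 T a) (hb : MemT0 𝓕 T b) :
    ∃ D : Ω → ℝ, Integrable D μ ∧
      IsEssSupFam μ (MemT0 𝓕 T) (fun τ ω => |ψ a τ ω - ψ b τ ω|) D := by
  have h0 : MemT0 𝓕 T (fun _ => (0 : ℝ)) :=
    ⟨isStoppingTime_const 𝓕 0, fun _ => ⟨le_rfl, hT⟩⟩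
  have hintD : ∀ τ, MemT0 𝓕 T τ → Integrable (fun ω => |ψ a τ ω - ψ b τ ω|) μ := by
    intro τ hτ
    refine (hZint.add hZint).mono'
      (((psi_meas hψ ha hτ).sub (psi_meas hψ hb hτ)).abs).aestronglyMeasurable ?_
    filter_upwards [psi_le_Z hZ ha hτ, psi_le_Z hZ hb hτ] with ω h1 h2
    have n1 := (hψ.1 a τ ha hτ).2 ω
    have n2 := (hψ.1 b τ hb hτ).2 ω
    rw [Real.norm_eq_abs, abs_abs, Pi.add_apply, abs_le]
    constructor <;> linarith
  have hbd : ∀ τ, MemT0 𝓕 T τ → (fun ω => |ψ a τ ω - ψ b τ ω|) ≤ᵐ[μ] (Z + Z) := by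
    intro τ hτ
    filter_upwards [psi_le_Z hZ ha hτ, psi_le_Z hZ hb hτ] with ω h1 h2
    have n1 := (hψ.1 a τ ha hτ).2 ω
    have n2 := (hψ.1 b τ hb hτ).2 ω
    rw [Pi.add_apply, abs_le]
    constructor <;> linarith
  obtain ⟨v, h1, h2, _⟩ := exists_essSupFam (μ := μ) (MemT0 𝓕 T)
    (fun τ ω => |ψ a τ ω - ψ b τ ω|) (fun _ => 0) h0 hintD (Z + Z) (hZint.add hZint) hbd
  exact ⟨v, h1, h2⟩

end MainAux


/-- Under uniform right continuity in expectation of the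
biadmissible family `ψ`, the value family `U₁(θ,S) = ess sup_{τ₁ ∈ T_θ} E[ψ(τ₁,S) | F_θ]`
is jointly right continuous in expectation along stopping times:
if `θ_n ↓ θ` and `S_n ↓ S` a.s., then `E[U₁(θ_n, S_n)] → E[U₁(θ, S)]`. -/
theorem U1_jointly_right_continuous
    {m0 : MeasurableSpace Ω} (μ : Measure Ω) [IsProbabilityMeasure μ]
    (𝓕 : Filtration ℝ m0) (T : ℝ) (hT : 0 ≤ T)
    (hFright : ∀ t : ℝ, 𝓕 t = ⨅ s ∈ Set.Ioi t, 𝓕 s)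
    (hFnull : ∀ A : Set Ω, μ A = 0 → MeasurableSet[𝓕 0] A)
    (ψ : (Ω → ℝ) → (Ω → ℝ) → Ω → ℝ)
    (hψ : Biadmissible 𝓕 T μ ψ)
    (Z : Ω → ℝ)
    (hZ : IsEssSupFam μ
      (fun p : (Ω → ℝ) × (Ω → ℝ) => MemT0 𝓕 T p.1 ∧ MemT0 𝓕 T p.2)
      (fun p => ψ p.1 p.2) Z)
    (hZint : Integrable Z μ)
    (hψurc : URCE 𝓕 T μ ψ)
    (U₁ : (Ω → ℝ) → (Ω → ℝ) → Ω → ℝ)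
    (hU₁ : ∀ θ S (hθ : MemT0 𝓕 T θ), MemT0 𝓕 T S →
      IsEssSupFam μ (fun τ => MemT0 𝓕 T τ ∧ θ ≤ᵐ[μ] τ)
        (fun τ => μ[ψ τ S | hθ.1.measurableSpace]) (U₁ θ S)) :
    ∀ θ S, MemT0 𝓕 T θ → MemT0 𝓕 T S →
      ∀ θn Sn : ℕ → Ω → ℝ,
        (∀ n, MemT0 𝓕 T (θn n)) → (∀ n, MemT0 𝓕 T (Sn n)) →
        DownAS μ θn θ → DownAS μ Sn S →
        Filter.Tendsto (fun n => ∫ ω, U₁ (θn n) (Sn n) ω ∂μ) Filter.atTop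
          (nhds (∫ ω, U₁ θ S ω ∂μ)) := by
  intro θ S hθ hS θn Sn hθn hSn hθd hSd
  classical
  have hθle : ∀ᵐ ω ∂μ, ∀ n, θ ω ≤ θn n ω := DownAS.le_ae hθd
  obtain ⟨V, hVint, hVsup, hVdir, hVub⟩ := exists_V hψ hZ hZint hθ hS
  choose Vn hVnint hVnsup hVndir hVnub using
    fun n => exists_V hψ hZ hZint (hθn n) (hSn n)
  choose Wn hWnint hWnsup hWndir hWnub using
    fun n => exists_V hψ hZ hZint (hθn n) hS
  choose Dn hDnint hDnsup using fun n => exists_D2 hψ hZ hZint hT hS (hSn n)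
  have hD0 : Tendsto (fun n => ∫ ω, Dn n ω ∂μ) atTop (𝓝 0) :=
    (hψurc S hS Sn hSn hSd).1 Dn hDnsup
  have hUV : (∫ ω, U₁ θ S ω ∂μ) = ∫ ω, V ω ∂μ :=
    integral_congr_ae ((hU₁ θ S hθ hS).ae_eq' hVsup)
  have hUVn : ∀ n, (∫ ω, U₁ (θn n) (Sn n) ω ∂μ) = ∫ ω, Vn n ω ∂μ := fun n =>
    integral_congr_ae ((hU₁ (θn n) (Sn n) (hθn n) (hSn n)).ae_eq' (hVnsup n))
  rw [hUV]
  refine Tendsto.congr (fun n => (hUVn n).symm) ?_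
  -- goal : Tendsto (fun n => ∫ Vn n) atTop (𝓝 (∫ V))
  have habs : ∀ n τ, MemT0 𝓕 T τ →
      (ψ τ (Sn n) ≤ᵐ[μ] ψ τ S + Dn n) ∧ (ψ τ S ≤ᵐ[μ] ψ τ (Sn n) + Dn n) := by
    intro n τ hτ
    have hd := (hDnsup n).1 τ hτ
    constructor <;>
      · filter_upwards [hd] with ω hω
        simp only [Pi.add_apply]
        have := abs_le.1 hω
        linarith [this.1, this.2]
  have hVW : ∀ n, |(∫ ω, Vn n ω ∂μ) - ∫ ω, Wn n ω ∂μ| ≤ ∫ ω, Dn n ω ∂μ := by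
    intro n
    set m := (hθn n).1.measurableSpace with hm_def
    have hm : m ≤ m0 := (hθn n).1.measurableSpace_le
    have key : ∀ (a b : ℕ → Ω → ℝ) (va : Ω → ℝ),
        (∀ τ, MemT0 𝓕 T τ → ψ τ (Sn n) ≤ᵐ[μ] ψ τ S + Dn n) → True := fun _ _ _ _ => trivial
    have h1 : Vn n ≤ᵐ[μ] Wn n + μ[Dn n|m] := by
      refine (hVnsup n).2 _ ?_
      rintro τ ⟨hτ, hle⟩
      have c1 : μ[ψ τ (Sn n)|m] ≤ᵐ[μ] μ[ψ τ S + Dn n|m] :=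
        condExp_mono (psi_int hψ hZ hZint hτ (hSn n))
          ((psi_int hψ hZ hZint hτ hS).add (hDnint n)) (habs n τ hτ).1
      have c2 : μ[ψ τ S + Dn n|m] =ᵐ[μ] μ[ψ τ S|m] + μ[Dn n|m] :=
        condExp_add (psi_int hψ hZ hZint hτ hS) (hDnint n) _
      have c3 : μ[ψ τ S|m] ≤ᵐ[μ] Wn n := (hWnsup n).1 τ ⟨hτ, hle⟩
      filter_upwards [c1, c2, c3] with ω a1 a2 a3
      simp only [Pi.add_apply] at *
      linarith
    have h2 : Wn n ≤ᵐ[μ] Vn n + μ[Dn n|m] := by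
      refine (hWnsup n).2 _ ?_
      rintro τ ⟨hτ, hle⟩
      have c1 : μ[ψ τ S|m] ≤ᵐ[μ] μ[ψ τ (Sn n) + Dn n|m] :=
        condExp_mono (psi_int hψ hZ hZint hτ hS)
          ((psi_int hψ hZ hZint hτ (hSn n)).add (hDnint n)) (habs n τ hτ).2
      have c2 : μ[ψ τ (Sn n) + Dn n|m] =ᵐ[μ] μ[ψ τ (Sn n)|m] + μ[Dn n|m] :=
        condExp_add (psi_int hψ hZ hZint hτ (hSn n)) (hDnint n) _
      have c3 : μ[ψ τ (Sn n)|m] ≤ᵐ[μ] Vn n := (hVnsup n).1 τ ⟨hτ, hle⟩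
      filter_upwards [c1, c2, c3] with ω a1 a2 a3
      simp only [Pi.add_apply] at *
      linarith
    have hCint : Integrable (μ[Dn n|m]) μ := integrable_condExp
    have hICD : (∫ ω, (μ[Dn n|m]) ω ∂μ) = ∫ ω, Dn n ω ∂μ := integral_condExp hm
    have i1 : (∫ ω, Vn n ω ∂μ) ≤ (∫ ω, Wn n ω ∂μ) + ∫ ω, Dn n ω ∂μ := by
      have h3 := integral_mono_ae (hVnint n) ((hWnint n).add hCint) h1
      simp only [Pi.add_apply] at h3
      rwa [integral_add (hWnint n) hCint, hICD] at h3
    have i2 : (∫ ω, Wn n ω ∂μ) ≤ (∫ ω, Vn n ω ∂μ) + ∫ ω, Dn n ω ∂μ := by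
      have h3 := integral_mono_ae (hWnint n) ((hVnint n).add hCint) h2
      simp only [Pi.add_apply] at h3
      rwa [integral_add (hVnint n) hCint, hICD] at h3
    rw [abs_le]
    constructor <;> linarith
  have hWle : ∀ n, (∫ ω, Wn n ω ∂μ) ≤ ∫ ω, V ω ∂μ := by
    intro n
    by_contra hcon
    push_neg at hcon
    obtain ⟨τ, ⟨hτ, hleτ⟩, hlt⟩ := hWndir n ((∫ ω, Wn n ω ∂μ) - ∫ ω, V ω ∂μ) (by linarith)
    have hθτ : θ ≤ᵐ[μ] τ := by
      filter_upwards [hθle, hleτ] with ω h1 h2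
      exact (h1 n).trans h2
    have := hVub τ hτ hθτ
    linarith
  have hWlow : ∀ a < (∫ ω, V ω ∂μ), ∀ᶠ n in atTop, a < ∫ ω, Wn n ω ∂μ := by
    intro a ha
    set ε := (∫ ω, V ω ∂μ) - a with hεdef
    have hε : 0 < ε := by simp only [hεdef]; linarith
    obtain ⟨τ, ⟨hτ, hθτ⟩, hVlt⟩ := hVdir (ε / 2) (by positivity)
    set σ : Ω → ℝ := fun ω => τ ω ⊔ θ ω with hσdef
    have hσ : MemT0 𝓕 T σ := MemT0.sup hτ hθ
    have hθσ : ∀ ω, θ ω ≤ σ ω := fun ω => le_sup_right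
    have hστ : σ =ᵐ[μ] τ := by filter_upwards [hθτ] with ω h using sup_eq_left.2 h
    have hψστ : (∫ ω, ψ σ S ω ∂μ) = ∫ ω, ψ τ S ω ∂μ := by
      refine integral_congr_ae ?_
      filter_upwards [hψ.2 σ τ S S hσ hτ hS hS, hστ] with ω h he using h he rfl
    set σn : ℕ → Ω → ℝ := fun n ω => σ ω ⊔ θn n ω with hσndef
    have hσn : ∀ n, MemT0 𝓕 T (σn n) := fun n => MemT0.sup hσ (hθn n)
    have hσd : DownAS μ σn σ := by
      filter_upwards [hθd] with ω hω
      refine ⟨fun n => sup_le_sup le_rfl (hω.1 n), ?_⟩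
      have ht : Tendsto (fun n => σ ω ⊔ θn n ω) atTop (𝓝 (σ ω ⊔ θ ω)) :=
        tendsto_const_nhds.max hω.2
      have : σ ω ⊔ θ ω = σ ω := sup_eq_left.2 (hθσ ω)
      rwa [this] at ht
    choose D' hD'int hD'sup using fun k => exists_D1 hψ hZ hZint hT hσ (hσn k)
    have hD'0 : Tendsto (fun k => ∫ ω, D' k ω ∂μ) atTop (𝓝 0) :=
      (hψurc σ hσ σn hσn hσd).2 D' hD'sup
    have hbnd : ∀ k, |(∫ ω, ψ (σn k) S ω ∂μ) - ∫ ω, ψ σ S ω ∂μ| ≤ ∫ ω, D' k ω ∂μ := by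
      intro k
      have hintk := psi_int hψ hZ hZint (hσn k) hS
      have hintσ := psi_int hψ hZ hZint hσ hS
      have h1 : (∫ ω, ψ (σn k) S ω ∂μ) - ∫ ω, ψ σ S ω ∂μ =
          ∫ ω, (ψ (σn k) S ω - ψ σ S ω) ∂μ := (integral_sub hintk hintσ).symm
      rw [h1]
      have h2 : |∫ ω, (ψ (σn k) S ω - ψ σ S ω) ∂μ| ≤ ∫ ω, |ψ (σn k) S ω - ψ σ S ω| ∂μ := by
        simpa [Real.norm_eq_abs] using
          norm_integral_le_integral_norm (fun ω => ψ (σn k) S ω - ψ σ S ω) (μ := μ)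
      refine h2.trans (integral_mono_ae (hintk.sub hintσ).abs (hD'int k) ?_)
      filter_upwards [(hD'sup k).1 S hS] with ω hω
      rw [abs_sub_comm]
      exact hω
    filter_upwards [hD'0.eventually (gt_mem_nhds (half_pos hε))] with k hk
    have hW := hWnub k (σn k) (hσn k) (Filter.Eventually.of_forall fun ω => le_sup_right)
    have hb := (abs_le.1 (hbnd k)).1
    have : a = (∫ ω, V ω ∂μ) - ε := by simp only [hεdef]; ring
    rw [this]
    have hτV : (∫ ω, V ω ∂μ) < (∫ ω, ψ τ S ω ∂μ) + ε / 2 := hVlt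
    linarith [hψστ]
  have hWtend : Tendsto (fun n => ∫ ω, Wn n ω ∂μ) atTop (𝓝 (∫ ω, V ω ∂μ)) := by
    refine tendsto_order.2 ⟨hWlow, ?_⟩
    intro b hb
    exact Filter.Eventually.of_forall fun n => lt_of_le_of_lt (hWle n) hb
  have hdiff : Tendsto (fun n => (∫ ω, Vn n ω ∂μ) - ∫ ω, Wn n ω ∂μ) atTop (𝓝 0) :=
    squeeze_zero_norm (fun n => by rw [Real.norm_eq_abs]; exact hVW n) hD0
  have hfin := hdiff.add hWtend
  rw [zero_add] at hfin
  exact hfin.congr fun n => by ring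
end
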